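/- arXiv:1705.11116 — 6 statements merged into one kernel-verified Lean document; each statement's English description precedes it below -/
import Mathlib

section
/- Let P be a set of n collinear points in ℝ² (all lying on a common line, n ≥ 1). Then the minimum number of disks needed to identify P is exactly ⌈(n+1)/2⌉. -/
noncomputable section

/-- The Euclidean plane. -/
abbrev Pt : Type := EuclideanSpace ℝ (Fin 2)

/-- A disk: a closed Euclidean ball with nonnegative radius. -/
def IsDisk (D : Set Pt) : Prop :=
  ∃ (c : Pt) (r : ℝ), 0 ≤ r ∧ D = Metric.closedBall c r

/-- A family of disks identifies a finite point set: every point is covered and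
every pair of distinct points is separated by some disk. -/
def Identifies (𝒟 : Finset (Set Pt)) (P : Finset Pt) : Prop :=
  (∀ p ∈ P, ∃ D ∈ 𝒟, p ∈ D) ∧
  (∀ p ∈ P, ∀ q ∈ P, p ≠ q → ∃ D ∈ 𝒟, (p ∈ D ∧ q ∉ D) ∨ (q ∈ D ∧ p ∉ D))

/-- Minimum number of disks needed to identify `P`. -/
def gammaID (P : Finset Pt) : ℕ :=
  sInf {k | ∃ 𝒟 : Finset (Set Pt), 𝒟.card = k ∧ (∀ D ∈ 𝒟, IsDisk D) ∧ Identifies 𝒟 P}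

open Finset Metric
open scoped RealInnerProductSpace


lemma between_mem {D : Set Pt} (hD : Convex ℝ D) (p₀ v : Pt) {a b c : ℝ}
    (hab : a ≤ b) (hbc : b ≤ c) (hp : a • v + p₀ ∈ D) (hq : c • v + p₀ ∈ D) :
    b • v + p₀ ∈ D := by
  rcases eq_or_lt_of_le (hab.trans hbc) with h | h
  · have hba : a = b := le_antisymm hab (hbc.trans h.ge)
    rw [← hba]; exact hp
  · set α := (c - b) / (c - a) with hα'
    set β := (b - a) / (c - a) with hβ'
    have hca : 0 < c - a := sub_pos.mpr h
    have hα : 0 ≤ α := div_nonneg (sub_nonneg.mpr hbc) hca.le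
    have hβ : 0 ≤ β := div_nonneg (sub_nonneg.mpr hab) hca.le
    have hsum : α + β = 1 := by
      rw [hα', hβ', ← add_div, div_eq_one_iff_eq hca.ne']
      ring
    have hcomb : α * a + β * c = b := by
      rw [hα', hβ']; field_simp; ring
    have key := hD hp hq hα hβ hsum
    have hmod : α • (a • v + p₀) + β • (c • v + p₀) = (α * a + β * c) • v + (α + β) • p₀ := by
      module
    rw [hmod, hcomb, hsum, one_smul] at key
    exact key

lemma exists_sorted (P : Finset Pt) (p₀ v : Pt) (hv : v ≠ 0)
    (hrep : ∀ p ∈ P, ∃ t : ℝ, p = t • v + p₀) :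
    ∃ τ : ℕ → ℝ, (∀ i j, i < j → j < P.card → τ i < τ j) ∧
      (∀ i, i < P.card → (τ i • v + p₀) ∈ P) ∧
      (∀ p ∈ P, ∃ i, i < P.card ∧ p = τ i • v + p₀) := by
  classical
  set gl : Pt → ℝ := fun p => ⟪p - p₀, v⟫ / ⟪v, v⟫ with hgl
  have hvv : ⟪v, v⟫ ≠ 0 := inner_self_ne_zero.mpr hv
  have hrepr : ∀ p ∈ P, p = gl p • v + p₀ := by
    intro p hp
    obtain ⟨t, ht⟩ := hrep p hp
    have hglp : gl p = t := by
      rw [ht]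
      simp only [hgl, add_sub_cancel_right, real_inner_smul_left]
      exact mul_div_cancel_right₀ t hvv
    rw [hglp, ← ht]
  set T : Finset ℝ := P.image gl with hT
  have hinj : Set.InjOn gl P := by
    intro p hp q hq h
    rw [hrepr p hp, hrepr q hq, h]
  have hcard : T.card = P.card := Finset.card_image_of_injOn hinj
  set e := T.orderIsoOfFin hcard with he
  refine ⟨fun i => if h : i < P.card then (e ⟨i, h⟩ : ℝ) else 0, ?_, ?_, ?_⟩
  · intro i j hij hj
    have hi : i < P.card := hij.trans hj
    simp only [dif_pos hi, dif_pos hj]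
    exact Subtype.coe_lt_coe.mpr (e.lt_iff_lt.mpr (Fin.mk_lt_mk.mpr hij))
  · intro i hi
    simp only [dif_pos hi]
    have hmem : ((e ⟨i, hi⟩ : T) : ℝ) ∈ T := (e ⟨i, hi⟩).2
    obtain ⟨p, hp, hgp⟩ := Finset.mem_image.mp hmem
    rw [← hgp, ← hrepr p hp]
    exact hp
  · intro p hp
    have hmem : gl p ∈ T := Finset.mem_image_of_mem _ hp
    obtain ⟨j, hj⟩ := e.surjective ⟨gl p, hmem⟩
    refine ⟨j.1, j.2, ?_⟩
    have : (if h : j.1 < P.card then (e ⟨j.1, h⟩ : ℝ) else 0) = gl p := by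
      rw [dif_pos j.2]
      simp only [Fin.eta, hj]
    simp only []
    rw [this]
    exact hrepr p hp

lemma lower_bound (P : Finset Pt) (hn : 1 ≤ P.card) (p₀ v : Pt) (hv : v ≠ 0)
    (hrep : ∀ p ∈ P, ∃ t : ℝ, p = t • v + p₀)
    (𝒟 : Finset (Set Pt)) (hconv : ∀ D ∈ 𝒟, Convex ℝ D) (hid : Identifies 𝒟 P) :
    P.card + 1 ≤ 2 * 𝒟.card := by
  classical
  obtain ⟨τ, hτlt, hτmem, hτsurj⟩ := exists_sorted P p₀ v hv hrep
  set n := P.card with hn'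
  set x : ℕ → Pt := fun i => τ i • v + p₀ with hx
  have hτle : ∀ i j, i ≤ j → j < n → τ i ≤ τ j := by
    intro i j hij hj
    rcases eq_or_lt_of_le hij with h | h
    · rw [h]
    · exact (hτlt i j h hj).le
  have hbtw : ∀ D ∈ 𝒟, ∀ a b c : ℕ, a ≤ b → b ≤ c → c < n →
      x a ∈ D → x c ∈ D → x b ∈ D := by
    intro D hD a b c hab hbc hc ha hcD
    exact between_mem (hconv D hD) p₀ v (hτle a b hab (lt_of_le_of_lt hbc hc))
      (hτle b c hbc hc) ha hcD
  set Good : ℕ → Set Pt × Bool → Prop := fun j pr =>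
    pr.1 ∈ 𝒟 ∧
    ((pr.2 = false ∧ ((j = 0 ∧ x 0 ∈ pr.1) ∨ (1 ≤ j ∧ j < n ∧ x j ∈ pr.1 ∧ x (j-1) ∉ pr.1))) ∨
     (pr.2 = true ∧ ((j = n ∧ x (n-1) ∈ pr.1) ∨ (1 ≤ j ∧ j < n ∧ x (j-1) ∈ pr.1 ∧ x j ∉ pr.1)))) with hGood
  have hxinj : ∀ a b, a < b → b < n → x a ≠ x b := by
    intro a b hab hb h
    have h2 : τ a = τ b := smul_left_injective ℝ hv (by
      have := h
      simpa [hx] using add_right_cancel this)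
    exact absurd h2 (ne_of_lt (hτlt a b hab hb))
  have hex : ∀ j : Fin (n+1), ∃ pr, Good j.1 pr := by
    rintro ⟨j, hj⟩
    dsimp only
    rcases eq_or_ne j 0 with rfl | hj0
    · obtain ⟨D, hD, hmem⟩ := hid.1 (x 0) (hτmem 0 (by omega))
      exact ⟨(D, false), hD, Or.inl ⟨rfl, Or.inl ⟨rfl, hmem⟩⟩⟩
    rcases eq_or_ne j n with rfl | hjn
    · obtain ⟨D, hD, hmem⟩ := hid.1 (x (n-1)) (hτmem (n-1) (by omega))
      exact ⟨(D, true), hD, Or.inr ⟨rfl, Or.inl ⟨rfl, hmem⟩⟩⟩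
    · have h1 : 1 ≤ j := by omega
      have h2 : j < n := by omega
      obtain ⟨D, hD, hsep⟩ := hid.2 (x (j-1)) (hτmem _ (by omega)) (x j) (hτmem _ h2)
        (hxinj (j-1) j (by omega) h2)
      rcases hsep with ⟨hm, hnm⟩ | ⟨hm, hnm⟩
      · exact ⟨(D, true), hD, Or.inr ⟨rfl, Or.inr ⟨h1, h2, hm, hnm⟩⟩⟩
      · exact ⟨(D, false), hD, Or.inl ⟨rfl, Or.inr ⟨h1, h2, hm, hnm⟩⟩⟩
  choose f hf using hex
  have key : ∀ (j j' : ℕ), j < j' → j' ≤ n → ∀ pr, Good j pr → Good j' pr → False := by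
    rintro j j' hlt hj' ⟨D, b⟩ ⟨hD, hg⟩ ⟨-, hg'⟩
    rcases hg with ⟨hb, hcase⟩ | ⟨hb, hcase⟩ <;>
      rcases hg' with ⟨hb', hcase'⟩ | ⟨hb', hcase'⟩
    · -- both false
      rcases hcase with ⟨hj0, h0⟩ | ⟨h1, h2, hmem, hnm⟩ <;>
        rcases hcase' with ⟨hj0', h0'⟩ | ⟨h1', h2', hmem', hnm'⟩
      · omega
      · exact hnm' (hbtw D hD 0 (j'-1) j' (by omega) (by omega) h2' h0 hmem')
      · omega
      · exact hnm' (hbtw D hD j (j'-1) j' (by omega) (by omega) h2' hmem hmem')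
    · exact Bool.noConfusion (hb.symm.trans hb')
    · exact Bool.noConfusion (hb'.symm.trans hb)
    · -- both true
      rcases hcase with ⟨hjn, h0⟩ | ⟨h1, h2, hmem, hnm⟩ <;>
        rcases hcase' with ⟨hjn', h0'⟩ | ⟨h1', h2', hmem', hnm'⟩
      · omega
      · omega
      · exact hnm (hbtw D hD (j-1) j (n-1) (by omega) (by omega) (by omega) hmem h0')
      · exact hnm (hbtw D hD (j-1) j (j'-1) (by omega) (by omega) (by omega) hmem hmem')
  have hfinj : Function.Injective f := by
    intro j j' h
    by_contra hne
    rcases lt_or_gt_of_ne hne with hlt | hlt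
    · exact key j.1 j'.1 hlt (Nat.lt_succ_iff.mp j'.2) (f j') (h ▸ hf j) (hf j')
    · exact key j'.1 j.1 hlt (Nat.lt_succ_iff.mp j.2) (f j) (h ▸ hf j') (hf j)
  have hmaps : ∀ j : Fin (n+1), j ∈ (Finset.univ : Finset (Fin (n+1))) →
      f j ∈ 𝒟 ×ˢ (Finset.univ : Finset Bool) := by
    intro j _
    exact Finset.mem_product.mpr ⟨(hf j).1, Finset.mem_univ _⟩
  have hcard := Finset.card_le_card_of_injOn f hmaps hfinj.injOn
  simp only [Finset.card_univ, Fintype.card_fin, Finset.card_product, Finset.card_univ,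
    Fintype.card_bool] at hcard
  omega

lemma upper_bound (P : Finset Pt) (hn : 1 ≤ P.card) (p₀ v : Pt) (hv : v ≠ 0)
    (hrep : ∀ p ∈ P, ∃ t : ℝ, p = t • v + p₀) :
    ∃ 𝒟 : Finset (Set Pt), 𝒟.card ≤ (P.card + 2)/2 ∧ (∀ D ∈ 𝒟, IsDisk D) ∧
      Identifies 𝒟 P := by
  classical
  obtain ⟨τ, hτlt, hτmem, hτsurj⟩ := exists_sorted P p₀ v hv hrep
  set n := P.card with hn'
  set k := (n + 2) / 2 with hk
  have hk1 : 1 ≤ k := by omega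
  have hkn : k ≤ n := by omega
  have hnk : n ≤ 2 * k - 1 := by omega
  have hτle : ∀ i j, i ≤ j → j < n → τ i ≤ τ j := by
    intro i j hij hj
    rcases eq_or_lt_of_le hij with h | h
    · rw [h]
    · exact (hτlt i j h hj).le
  set c : ℕ → ℝ := fun j =>
    if j = 0 then τ 0 - 1 else if j < n then (τ (j-1) + τ j)/2 else τ (n-1) + 1 with hc
  have hc1 : ∀ j i, i < n → j ≤ i → c j < τ i := by
    intro j i hi hji
    by_cases h0 : j = 0
    · subst h0
      simp only [hc, if_pos rfl]
      have := hτle 0 i (by omega) hi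
      linarith
    · have hjn : j < n := by omega
      simp only [hc, if_neg h0, if_pos hjn]
      have h1 : τ (j-1) < τ j := hτlt _ _ (by omega) hjn
      have h2 : τ j ≤ τ i := hτle j i hji hi
      linarith
  have hc2 : ∀ j i, i < n → i < j → τ i < c j := by
    intro j i hi hij
    have h0 : j ≠ 0 := by omega
    by_cases hjn : j < n
    · simp only [hc, if_neg h0, if_pos hjn]
      have h1 : τ i ≤ τ (j-1) := hτle i (j-1) (by omega) (by omega)
      have h2 : τ (j-1) < τ j := hτlt _ _ (by omega) hjn
      linarith
    · simp only [hc, if_neg h0, if_neg hjn]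
      have := hτle i (n-1) (by omega) (by omega)
      linarith
  have hcmono : ∀ a b, a < b → b ≤ n → c a < c b := by
    intro a b hab hbn
    have h1 : c a < τ a := hc1 a a (by omega) le_rfl
    have h2 : τ a < c b := hc2 b a (by omega) hab
    linarith
  set D : ℕ → Set Pt := fun I => Metric.closedBall
    (((c I + c (min (I+k) n))/2) • v + p₀) ((c (min (I+k) n) - c I)/2 * ‖v‖) with hD
  have hrad : ∀ I, I < k → 0 ≤ (c (min (I+k) n) - c I)/2 * ‖v‖ := by
    intro I hI
    have h1 : c I < c (min (I+k) n) := hcmono I (min (I+k) n) (by omega) (by omega)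
    have h2 : (0:ℝ) ≤ ‖v‖ := norm_nonneg v
    nlinarith
  have hmem : ∀ I, I < k → ∀ i, i < n → ((τ i • v + p₀) ∈ D I ↔ I ≤ i ∧ i < I + k) := by
    intro I hI i hi
    have hvpos : 0 < ‖v‖ := norm_pos_iff.mpr hv
    simp only [hD, Metric.mem_closedBall]
    set a := c I with ha
    set b := c (min (I+k) n) with hb
    have hdist : dist (τ i • v + p₀) (((a+b)/2) • v + p₀) = |τ i - (a+b)/2| * ‖v‖ := by
      rw [dist_eq_norm]
      have hsub : (τ i • v + p₀) - (((a+b)/2) • v + p₀) = (τ i - (a+b)/2) • v := by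
        module
      rw [hsub, norm_smul, Real.norm_eq_abs]
    rw [hdist, mul_le_mul_iff_left₀ hvpos, abs_le]
    constructor
    · rintro ⟨h1, h2⟩
      have hta : a ≤ τ i := by linarith
      have htb : τ i ≤ b := by linarith
      constructor
      · by_contra h
        push_neg at h
        exact absurd hta (not_le.mpr (hc2 I i hi h))
      · by_contra h
        push_neg at h
        have hmin : min (I+k) n ≤ i := by omega
        exact absurd htb (not_le.mpr (hc1 (min (I+k) n) i hi hmin))
    · rintro ⟨h1, h2⟩
      have hta : a < τ i := hc1 I i hi h1
      have htb : τ i < b := hc2 (min (I+k) n) i hi (by omega)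
      constructor <;> linarith
  refine ⟨(Finset.range k).image D, ?_, ?_, ?_, ?_⟩
  · calc ((Finset.range k).image D).card ≤ (Finset.range k).card := Finset.card_image_le
      _ = k := Finset.card_range k
  · intro D' hD'
    obtain ⟨I, hI, rfl⟩ := Finset.mem_image.mp hD'
    exact ⟨_, _, hrad I (Finset.mem_range.mp hI), rfl⟩
  · intro p hp
    obtain ⟨i, hi, rfl⟩ := hτsurj p hp
    by_cases hik : i < k
    · exact ⟨D 0, Finset.mem_image_of_mem D (Finset.mem_range.mpr hk1),
        (hmem 0 hk1 i hi).mpr ⟨by omega, by omega⟩⟩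
    · exact ⟨D (i + 1 - k), Finset.mem_image_of_mem D (Finset.mem_range.mpr (by omega)),
        (hmem _ (by omega) i hi).mpr ⟨by omega, by omega⟩⟩
  · intro p hp q hq hpq
    obtain ⟨i, hi, rfl⟩ := hτsurj p hp
    obtain ⟨i', hi', rfl⟩ := hτsurj q hq
    have hne : i ≠ i' := by
      rintro rfl
      exact hpq rfl
    have claim : ∀ a b, a < b → b < n →
        ∃ I, I < k ∧ ((I ≤ a ∧ a < I + k) ∧ ¬(I ≤ b ∧ b < I + k) ∨
          (I ≤ b ∧ b < I + k) ∧ ¬(I ≤ a ∧ a < I + k)) := by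
      intro a b hab hbn
      rcases le_or_gt (k-1) a with h | h
      · exact ⟨a + 1 - k, by omega, Or.inl (by omega)⟩
      · exact ⟨max (a+1) (b+1-k), by omega, Or.inr (by omega)⟩
    rcases hne.lt_or_gt with hlt | hlt
    · obtain ⟨I, hI, hcase⟩ := claim i i' hlt hi'
      refine ⟨D I, Finset.mem_image_of_mem D (Finset.mem_range.mpr hI), ?_⟩
      rcases hcase with ⟨h1, h2⟩ | ⟨h1, h2⟩
      · exact Or.inl ⟨(hmem I hI i hi).mpr h1, fun hm => h2 ((hmem I hI i' hi').mp hm)⟩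
      · exact Or.inr ⟨(hmem I hI i' hi').mpr h1, fun hm => h2 ((hmem I hI i hi).mp hm)⟩
    · obtain ⟨I, hI, hcase⟩ := claim i' i hlt hi
      refine ⟨D I, Finset.mem_image_of_mem D (Finset.mem_range.mpr hI), ?_⟩
      rcases hcase with ⟨h1, h2⟩ | ⟨h1, h2⟩
      · exact Or.inr ⟨(hmem I hI i' hi').mpr h1, fun hm => h2 ((hmem I hI i hi).mp hm)⟩
      · exact Or.inl ⟨(hmem I hI i hi).mpr h1, fun hm => h2 ((hmem I hI i' hi').mp hm)⟩


/-- For `n ≥ 1` collinear points the minimum identifying number is exactly `⌈(n+1)/2⌉`. -/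
theorem gammaID_collinear (P : Finset Pt) (hn : 1 ≤ P.card)
    (hcol : Collinear ℝ (P : Set Pt)) :
    gammaID P = (P.card + 2) / 2 := by
  classical
  obtain ⟨p₀, v0, hrep0⟩ := (collinear_iff_exists_forall_eq_smul_vadd (k := ℝ) (P : Set Pt)).mp hcol
  have hrep0' : ∀ p ∈ P, ∃ t : ℝ, p = t • v0 + p₀ := by
    intro p hp
    obtain ⟨t, ht⟩ := hrep0 p (Finset.mem_coe.mpr hp)
    exact ⟨t, by rw [ht, vadd_eq_add]⟩
  obtain ⟨v, hv, hrep⟩ : ∃ v : Pt, v ≠ 0 ∧ ∀ p ∈ P, ∃ t : ℝ, p = t • v + p₀ := by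
    by_cases hv0 : v0 = 0
    · refine ⟨EuclideanSpace.single 0 1, ?_, ?_⟩
      · intro h
        have := congrArg (fun w : Pt => w 0) h
        simp [EuclideanSpace.single_apply] at this
      · intro p hp
        obtain ⟨t, ht⟩ := hrep0' p hp
        rw [hv0] at ht
        refine ⟨0, ?_⟩
        rw [ht]
        simp
    · exact ⟨v0, hv0, hrep0'⟩
  obtain ⟨𝒟₀, hcard₀, hdisk₀, hid₀⟩ := upper_bound P hn p₀ v hv hrep
  have hmemS : 𝒟₀.card ∈
      {k | ∃ 𝒟 : Finset (Set Pt), 𝒟.card = k ∧ (∀ D ∈ 𝒟, IsDisk D) ∧ Identifies 𝒟 P} :=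
    ⟨𝒟₀, rfl, hdisk₀, hid₀⟩
  have hlb : ∀ s ∈ {k | ∃ 𝒟 : Finset (Set Pt), 𝒟.card = k ∧ (∀ D ∈ 𝒟, IsDisk D) ∧
      Identifies 𝒟 P}, (P.card + 2) / 2 ≤ s := by
    rintro s ⟨𝒟, rfl, hdisk, hid⟩
    have hconv : ∀ D ∈ 𝒟, Convex ℝ D := by
      intro D hD
      obtain ⟨cc, r, hr, rfl⟩ := hdisk D hD
      exact convex_closedBall cc r
    have := lower_bound P hn p₀ v hv hrep 𝒟 hconv hid
    omega
  rw [gammaID]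
  exact le_antisymm ((Nat.sInf_le hmemS).trans hcard₀) (le_csInf ⟨_, hmemS⟩ hlb)
end
end

section
/- For every n ≥ 1 there exists a set of n collinear points in ℝ² that is identified by ⌈(n+1)/2⌉ disks; specifically, the disks D_i meeting the point set exactly in the consecutive points x_i, …, x_{i+⌈n/2⌉} for i = 1, …, ⌈(n+1)/2⌉ form an identifying set. -/
noncomputable section

/-- Embed the real line into the plane. -/
def ptf (t : ℝ) : Pt := EuclideanSpace.single 0 t

lemma ptf_dist (s t : ℝ) : dist (ptf s) (ptf t) = dist s t :=
  EuclideanSpace.dist_single_same 0 s t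

lemma ptf_inj : Function.Injective ptf := by
  intro s t h
  have := ptf_dist s t
  rw [h, dist_self] at this
  exact dist_eq_zero.mp this.symm

/-- Membership of a line point in a line-centered ball. -/
lemma ptf_mem_ball (t c r : ℝ) :
    ptf t ∈ Metric.closedBall (ptf c) r ↔ |t - c| ≤ r := by
  rw [Metric.mem_closedBall, ptf_dist, Real.dist_eq]

/-- Key membership characterization: the `i`-th disk contains point `j`
iff `i ≤ j ≤ i + m`. -/
lemma ptf_mem_disk (i j m : ℕ) :
    ptf (j : ℝ) ∈ Metric.closedBall (ptf ((i : ℝ) + (m : ℝ) / 2)) ((m : ℝ) / 2) ↔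
      i ≤ j ∧ j ≤ i + m := by
  rw [ptf_mem_ball, abs_le]
  constructor
  · rintro ⟨h1, h2⟩
    constructor
    · exact_mod_cast (by linarith : (i : ℝ) ≤ j)
    · exact_mod_cast (by linarith : (j : ℝ) ≤ i + m)
  · rintro ⟨h1, h2⟩
    have h1' : (i : ℝ) ≤ j := by exact_mod_cast h1
    have h2' : (j : ℝ) ≤ i + m := by exact_mod_cast h2
    constructor <;> linarith

/-- For every `n ≥ 1` there is a set of `n` collinear points identified by
`⌈(n+1)/2⌉` disks. -/
theorem exists_collinear_identified (n : ℕ) (hn : 1 ≤ n) :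
    ∃ P : Finset Pt, P.card = n ∧ Collinear ℝ (P : Set Pt) ∧
      ∃ 𝒟 : Finset (Set Pt), 𝒟.card = (n + 2) / 2 ∧
        (∀ D ∈ 𝒟, IsDisk D) ∧ Identifies 𝒟 P := by
  classical
  set m : ℕ := n / 2 with hm
  set k : ℕ := m + 1 with hk
  have hkm : n ≤ k + m := by omega
  set P : Finset Pt := (Finset.range n).image (fun j : ℕ => ptf (j : ℝ)) with hP
  set B : ℕ → Set Pt :=
    fun i => Metric.closedBall (ptf ((i : ℝ) + (m : ℝ) / 2)) ((m : ℝ) / 2) with hB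
  set 𝒟 : Finset (Set Pt) := (Finset.range k).image B with h𝒟
  have memB : ∀ i j : ℕ, ptf (j : ℝ) ∈ B i ↔ i ≤ j ∧ j ≤ i + m := fun i j =>
    ptf_mem_disk i j m
  have Binj : Set.InjOn B (Finset.range k : Set ℕ) := by
    intro a _ b _ hab
    by_contra hne
    rcases Nat.lt_or_ge a b with h | h
    · have h1 : ptf (a : ℝ) ∈ B a := (memB a a).mpr ⟨le_refl _, Nat.le_add_right _ _⟩
      rw [hab] at h1
      have := ((memB b a).mp h1).1
      omega
    · have h' : b < a := lt_of_le_of_ne h (Ne.symm hne)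
      have h1 : ptf (b : ℝ) ∈ B b := (memB b b).mpr ⟨le_refl _, Nat.le_add_right _ _⟩
      rw [← hab] at h1
      have := ((memB a b).mp h1).1
      omega
  have ptf_smul : ∀ t : ℝ, ptf t = t • EuclideanSpace.single 0 (1 : ℝ) := by
    intro t
    ext i
    by_cases hi : i = 0 <;>
      simp [ptf, EuclideanSpace.single_apply, hi]
  refine ⟨P, ?_, ?_, 𝒟, ?_, ?_, ?_, ?_⟩
  · rw [hP, Finset.card_image_of_injective _ (fun a b h => ?_), Finset.card_range]
    exact_mod_cast ptf_inj h
  · rw [collinear_iff_exists_forall_eq_smul_vadd]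
    refine ⟨0, EuclideanSpace.single 0 (1 : ℝ), ?_⟩
    intro p hp
    simp only [hP, Finset.coe_image, Set.mem_image, Finset.mem_coe,
      Finset.mem_range] at hp
    obtain ⟨j, -, rfl⟩ := hp
    exact ⟨(j : ℝ), by simp [ptf_smul]⟩
  · rw [h𝒟, Finset.card_image_of_injOn Binj, Finset.card_range]
    omega
  · intro D hD
    rw [h𝒟, Finset.mem_image] at hD
    obtain ⟨i, -, rfl⟩ := hD
    exact ⟨_, _, by positivity, rfl⟩
  · intro p hp
    rw [hP, Finset.mem_image] at hp
    obtain ⟨j, hj, rfl⟩ := hp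
    rw [Finset.mem_range] at hj
    exact ⟨B (min j (k - 1)), Finset.mem_image_of_mem B (Finset.mem_range.mpr (by omega)),
      (memB _ _).mpr ⟨by omega, by omega⟩⟩
  · intro p hp q hq hpq
    rw [hP, Finset.mem_image] at hp hq
    obtain ⟨j, hj, rfl⟩ := hp
    obtain ⟨j', hj', rfl⟩ := hq
    rw [Finset.mem_range] at hj hj'
    have hjj' : j ≠ j' := fun h => hpq (by rw [h])
    have main : ∀ a b : ℕ, a < n → b < n → a < b →
        ∃ D ∈ 𝒟, (ptf (a : ℝ) ∈ D ∧ ptf (b : ℝ) ∉ D) ∨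
          (ptf (b : ℝ) ∈ D ∧ ptf (a : ℝ) ∉ D) := by
      intro a b ha hb hab
      rcases Nat.lt_or_ge b k with hbk | hbk
      · refine ⟨B b, Finset.mem_image_of_mem B (Finset.mem_range.mpr hbk),
          Or.inr ⟨(memB _ _).mpr ⟨le_refl _, Nat.le_add_right _ _⟩, ?_⟩⟩
        intro hmem
        have := ((memB _ _).mp hmem).1
        omega
      · refine ⟨B (a - m), Finset.mem_image_of_mem B (Finset.mem_range.mpr (by omega)),
          Or.inl ⟨(memB _ _).mpr ⟨by omega, by omega⟩, ?_⟩⟩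
        intro hmem
        have := ((memB _ _).mp hmem).2
        omega
    rcases Nat.lt_or_ge j j' with h | h
    · exact main j j' hj hj' h
    · obtain ⟨D, hD, hor⟩ := main j' j hj' hj (by omega)
      exact ⟨D, hD, hor.symm⟩
end
end

section
/- Let P be a set of n points in ℝ² with no two points having the same x-coordinate. Then P can be identified by at most ⌈(n+1)/2⌉ disks. -/
noncomputable section

def mk2 (x y : ℝ) : Pt := WithLp.toLp 2 ![x, y]
@[simp] lemma mk2_zero (x y : ℝ) : mk2 x y 0 = x := rfl
@[simp] lemma mk2_one (x y : ℝ) : mk2 x y 1 = y := rfl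

lemma mem_disk (z : Pt) (r : ℝ) (hr : 0 ≤ r) (p : Pt) :
    p ∈ Metric.closedBall z r ↔ (p 0 - z 0)^2 + (p 1 - z 1)^2 ≤ r^2 := by
  rw [Metric.mem_closedBall, EuclideanSpace.dist_eq, Fin.sum_univ_two,
    Real.dist_eq, Real.dist_eq, sq_abs, sq_abs, ← Real.sqrt_sq hr,
    Real.sqrt_le_sqrt_iff (by positivity), Real.sq_sqrt (by positivity)]

def cross (a b c : Pt) : ℝ := (b 0 - a 0) * (c 1 - a 1) - (b 1 - a 1) * (c 0 - a 0)

def Ee (a b c : Pt) : ℝ := (c 0 - a 0) * (c 0 - b 0) + (c 1 - a 1) * (c 1 - b 1)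

lemma exists_disk_pair (a b : Pt) (hab : a 0 < b 0) (F : Finset Pt)
    (h : ∀ c ∈ F, cross a b c < 0 ∨ (cross a b c = 0 ∧ (c 0 < a 0 ∨ b 0 < c 0))) :
    ∃ D : Set Pt, IsDisk D ∧ a ∈ D ∧ b ∈ D ∧ ∀ c ∈ F, c ∉ D := by
  set G : Finset ℝ := insert (0:ℝ) (F.image fun c => Ee a b c / (2 * cross a b c)) with hG
  have hGne : G.Nonempty := ⟨0, Finset.mem_insert_self _ _⟩
  set k : ℝ := G.max' hGne + 1 with hk
  have hkgt : ∀ c ∈ F, Ee a b c / (2 * cross a b c) < k := by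
    intro c hc
    have hmemG : Ee a b c / (2 * cross a b c) ∈ G := by
      rw [hG]
      exact Finset.mem_insert_of_mem (Finset.mem_image_of_mem _ hc)
    have := Finset.le_max' G _ hmemG
    linarith
  set z : Pt := mk2 ((a 0 + b 0)/2 - k*(b 1 - a 1)) ((a 1 + b 1)/2 + k*(b 0 - a 0)) with hz
  set r : ℝ := dist a z with hr
  have hr0 : 0 ≤ r := dist_nonneg
  have hr2 : r^2 = (a 0 - z 0)^2 + (a 1 - z 1)^2 := by
    rw [hr, EuclideanSpace.dist_eq, Fin.sum_univ_two, Real.dist_eq, Real.dist_eq,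
      sq_abs, sq_abs, Real.sq_sqrt (by positivity)]
  have key : ∀ p : Pt, (p 0 - z 0)^2 + (p 1 - z 1)^2
      = (a 0 - z 0)^2 + (a 1 - z 1)^2 + (Ee a b p - 2*k*cross a b p) := by
    intro p
    simp only [hz, mk2_zero, mk2_one, Ee, cross]
    ring
  have hmem : ∀ p : Pt, p ∈ Metric.closedBall z r ↔ Ee a b p - 2*k*cross a b p ≤ 0 := by
    intro p
    rw [mem_disk z r hr0, key, hr2]
    constructor <;> intro hh <;> linarith
  refine ⟨Metric.closedBall z r, ⟨z, r, hr0, rfl⟩, ?_, ?_, ?_⟩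
  · rw [hmem]
    have h1 : Ee a b a = 0 := by simp [Ee]
    have h2 : cross a b a = 0 := by simp [cross]
    rw [h1, h2]; ring_nf; exact le_refl 0
  · rw [hmem]
    have h1 : Ee a b b = 0 := by simp only [Ee]; ring
    have h2 : cross a b b = 0 := by simp only [cross]; ring
    rw [h1, h2]; ring_nf; exact le_refl 0
  · intro c hc
    rw [hmem]
    push_neg
    rcases h c hc with hneg | ⟨hzero, hout⟩
    · have h2 : 2 * cross a b c < 0 := by linarith
      have := (div_lt_iff_of_neg h2).1 (hkgt c hc)
      linarith
    · rw [hzero]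
      have hE : 0 < Ee a b c := by
        have hprod : 0 < (c 0 - a 0) * (c 0 - b 0) := by
          rcases hout with h1 | h1
          · apply mul_pos_of_neg_of_neg <;> linarith
          · apply mul_pos <;> linarith
        have hcr : (b 0 - a 0) * (c 1 - a 1) = (b 1 - a 1) * (c 0 - a 0) := by
          have := hzero; simp only [cross] at this; linarith
        have hba : 0 < b 0 - a 0 := by linarith
        have hEid : Ee a b c * (b 0 - a 0)^2
            = (c 0 - a 0) * (c 0 - b 0) * ((b 0 - a 0)^2 + (b 1 - a 1)^2) := by
          simp only [Ee]
          linear_combination ((b 0 - a 0)*(c 1 - a 1) + (b 1 - a 1)*(c 0 - a 0) - (b 0 - a 0)*(b 1 - a 1)) * hcr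
        have h4 : 0 < Ee a b c * (b 0 - a 0)^2 := by
          rw [hEid]
          exact mul_pos hprod (by positivity)
        have h5 : 0 < (b 0 - a 0)^2 := by positivity
        nlinarith [h4, h5]
      linarith

local instance inst_s8 : DecidableEq Pt := Classical.decEq _

def lineval (m : ℝ) (a b : Pt) : ℝ := a 1 + (b 1 - a 1) * (m - a 0) / (b 0 - a 0)

lemma lineval_left (m : ℝ) (a b c : Pt) (h1 : a 0 < b 0) (h2 : c 0 < b 0) :
    lineval m c b - lineval m a b = cross a b c * (b 0 - m) / ((b 0 - a 0) * (b 0 - c 0)) := by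
  have e1 : b 0 - a 0 ≠ 0 := by linarith
  have e2 : b 0 - c 0 ≠ 0 := by linarith
  simp only [lineval, cross]
  field_simp
  ring

lemma lineval_right (m : ℝ) (a b c : Pt) (h1 : a 0 < b 0) (h2 : a 0 < c 0) :
    lineval m a c - lineval m a b = cross a b c * (m - a 0) / ((b 0 - a 0) * (c 0 - a 0)) := by
  have e1 : b 0 - a 0 ≠ 0 := by linarith
  have e2 : c 0 - a 0 ≠ 0 := by linarith
  simp only [lineval, cross]
  field_simp
  ring

lemma exists_pair (m : ℝ) (S : Finset Pt)
    (hx : ∀ p ∈ S, ∀ q ∈ S, p ≠ q → p 0 ≠ q 0)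
    (hm : ∀ p ∈ S, p 0 ≠ m)
    (hL : ∃ a ∈ S, a 0 < m) (hR : ∃ b ∈ S, m < b 0) :
    ∃ a ∈ S, ∃ b ∈ S, a 0 < m ∧ m < b 0 ∧
      ∃ D : Set Pt, IsDisk D ∧ a ∈ D ∧ b ∈ D ∧ ∀ c ∈ S, c ≠ a → c ≠ b → c ∉ D := by
  obtain ⟨a0, ha0S, ha0⟩ := hL
  obtain ⟨b0, hb0S, hb0⟩ := hR
  set T : Finset (Pt × Pt) :=
    (S.filter fun p => p 0 < m) ×ˢ (S.filter fun p => m < p 0) with hT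
  have hmemT : ∀ q : Pt × Pt, q ∈ T ↔ (q.1 ∈ S ∧ q.1 0 < m) ∧ (q.2 ∈ S ∧ m < q.2 0) := by
    intro q
    simp [hT, Finset.mem_product, Finset.mem_filter]
  have hTne : T.Nonempty := ⟨(a0, b0), (hmemT _).2 ⟨⟨ha0S, ha0⟩, ⟨hb0S, hb0⟩⟩⟩
  obtain ⟨q0, hq0T, hq0max⟩ := T.exists_max_image (fun q => lineval m q.1 q.2) hTne
  set T' : Finset (Pt × Pt) :=
    T.filter (fun q => lineval m q0.1 q0.2 ≤ lineval m q.1 q.2) with hT'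
  have hT'ne : T'.Nonempty := ⟨q0, Finset.mem_filter.2 ⟨hq0T, le_refl _⟩⟩
  obtain ⟨q, hqT', hqmin⟩ := T'.exists_min_image (fun q => q.2 0 - q.1 0) hT'ne
  have hqT : q ∈ T := (Finset.mem_filter.1 hqT').1
  obtain ⟨⟨haS, ham⟩, hbS, hbm⟩ := (hmemT q).1 hqT
  set a := q.1
  set b := q.2
  have hmax : ∀ q' ∈ T, lineval m q'.1 q'.2 ≤ lineval m a b :=
    fun q' hq' => le_trans (hq0max q' hq') (Finset.mem_filter.1 hqT').2
  have hab : a 0 < b 0 := lt_trans ham hbm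
  refine ⟨a, haS, b, hbS, ham, hbm, ?_⟩
  have hside : ∀ c ∈ (S.erase a).erase b,
      cross a b c < 0 ∨ (cross a b c = 0 ∧ (c 0 < a 0 ∨ b 0 < c 0)) := ?_
  · obtain ⟨D, hD, haD, hbD, hex⟩ := exists_disk_pair a b hab ((S.erase a).erase b) hside
    exact ⟨D, hD, haD, hbD, fun c hc hca hcb =>
      hex c (Finset.mem_erase.2 ⟨hcb, Finset.mem_erase.2 ⟨hca, hc⟩⟩)⟩
  intro c hcF
  obtain ⟨hcb, hca, hcS⟩ : c ≠ b ∧ c ≠ a ∧ c ∈ S := by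
    have h1 := Finset.mem_erase.1 hcF
    have h2 := Finset.mem_erase.1 h1.2
    exact ⟨h1.1, h2.1, h2.2⟩
  rcases lt_trichotomy (cross a b c) 0 with hneg | hzero | hpos
  · exact Or.inl hneg
  · refine Or.inr ⟨hzero, ?_⟩
    rcases (hm c hcS).lt_or_gt with hcl | hcr
    · -- c on the left: (c, b) ∈ T', minimal width gives c 0 < a 0
      left
      have hcbT : (c, b) ∈ T := (hmemT _).2 ⟨⟨hcS, hcl⟩, ⟨hbS, hbm⟩⟩
      have heq : lineval m c b = lineval m a b := by
        have := lineval_left m a b c hab (lt_trans hcl hbm)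
        rw [hzero] at this
        simp at this
        linarith
      have hcbT' : (c, b) ∈ T' := Finset.mem_filter.2 ⟨hcbT, by
        rw [heq]; exact (Finset.mem_filter.1 hqT').2⟩
      have := hqmin (c, b) hcbT'
      simp only at this
      have hle : c 0 ≤ a 0 := by linarith
      exact lt_of_le_of_ne hle (hx c hcS a haS hca)
    · -- c on the right: (a, c) ∈ T', minimal width gives b 0 < c 0
      right
      have hacT : (a, c) ∈ T := (hmemT _).2 ⟨⟨haS, ham⟩, ⟨hcS, hcr⟩⟩
      have heq : lineval m a c = lineval m a b := by
        have := lineval_right m a b c hab (lt_trans ham hcr)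
        rw [hzero] at this
        simp at this
        linarith
      have hacT' : (a, c) ∈ T' := Finset.mem_filter.2 ⟨hacT, by
        rw [heq]; exact (Finset.mem_filter.1 hqT').2⟩
      have := hqmin (a, c) hacT'
      simp only at this
      have hle : b 0 ≤ c 0 := by linarith
      exact lt_of_le_of_ne hle (hx b hbS c hcS (fun h => hcb h.symm))
  · exfalso
    rcases (hm c hcS).lt_or_gt with hcl | hcr
    · have hcbT : (c, b) ∈ T := (hmemT _).2 ⟨⟨hcS, hcl⟩, ⟨hbS, hbm⟩⟩
      have hid := lineval_left m a b c hab (lt_trans hcl hbm)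
      have hpos2 : 0 < cross a b c * (b 0 - m) / ((b 0 - a 0) * (b 0 - c 0)) := by
        apply div_pos (mul_pos hpos (by linarith))
        apply mul_pos <;> linarith [lt_trans hcl hbm]
      have := hmax (c, b) hcbT
      simp only at this
      linarith
    · have hacT : (a, c) ∈ T := (hmemT _).2 ⟨⟨haS, ham⟩, ⟨hcS, hcr⟩⟩
      have hid := lineval_right m a b c hab (lt_trans ham hcr)
      have hpos2 : 0 < cross a b c * (m - a 0) / ((b 0 - a 0) * (c 0 - a 0)) := by
        apply div_pos (mul_pos hpos (by linarith))
        apply mul_pos <;> linarith [lt_trans ham hcr]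
      have := hmax (a, c) hacT
      simp only at this
      linarith

local instance : DecidableEq (Set Pt) := Classical.decEq _

lemma step (m : ℝ) : ∀ k : ℕ, ∀ S : Finset Pt,
    (∀ p ∈ S, ∀ q ∈ S, p ≠ q → p 0 ≠ q 0) →
    (∀ p ∈ S, p 0 ≠ m) →
    (S.filter fun p => m < p 0).card = k →
    (S.filter fun p => p 0 < m).card ≤ k + 1 →
    ∃ 𝒟 : Finset (Set Pt), 𝒟.card ≤ k ∧ (∀ D ∈ 𝒟, IsDisk D) ∧
      (∀ p ∈ S, m < p 0 → ∃ D ∈ 𝒟, p ∈ D) ∧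
      (∀ p ∈ S, ∀ q ∈ S, p ≠ q → ((p 0 < m) ↔ (q 0 < m)) →
        ∃ D ∈ 𝒟, (p ∈ D ∧ q ∉ D) ∨ (q ∈ D ∧ p ∉ D)) := by
  intro k
  induction k with
  | zero =>
    intro S hx hm hR hL
    refine ⟨∅, le_refl _, by simp, ?_, ?_⟩
    · intro p hp hpm
      exfalso
      have : p ∈ S.filter fun p => m < p 0 := Finset.mem_filter.2 ⟨hp, hpm⟩
      rw [Finset.card_eq_zero.1 hR] at this
      simp at this
    · intro p hp q hq hpq hiff
      exfalso
      have hpl : p 0 < m := by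
        rcases (hm p hp).lt_or_gt with h | h
        · exact h
        · exfalso
          have : p ∈ S.filter fun p => m < p 0 := Finset.mem_filter.2 ⟨hp, h⟩
          rw [Finset.card_eq_zero.1 hR] at this
          simp at this
      have hql : q 0 < m := hiff.1 hpl
      have hsub : ({p, q} : Finset Pt) ⊆ S.filter fun p => p 0 < m := by
        intro x hx'
        rcases Finset.mem_insert.1 hx' with rfl | hx'
        · exact Finset.mem_filter.2 ⟨hp, hpl⟩
        · rw [Finset.mem_singleton.1 hx']
          exact Finset.mem_filter.2 ⟨hq, hql⟩
      have := Finset.card_le_card hsub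
      rw [Finset.card_pair hpq] at this
      linarith
  | succ k ih =>
    intro S hx hm hR hL
    by_cases hLne : ∃ a ∈ S, a 0 < m
    · -- both sides nonempty: remove a pair
      have hRne : ∃ b ∈ S, m < b 0 := by
        have : (S.filter fun p => m < p 0).Nonempty := by
          rw [← Finset.card_pos, hR]; exact Nat.succ_pos k
        obtain ⟨b, hb⟩ := this
        exact ⟨b, (Finset.mem_filter.1 hb).1, (Finset.mem_filter.1 hb).2⟩
      obtain ⟨a, haS, b, hbS, ham, hbm, D, hD, haD, hbD, hex⟩ :=
        exists_pair m S hx hm hLne hRne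
      have hne : a ≠ b := fun h => by rw [h] at ham; linarith
      set S' : Finset Pt := (S.erase a).erase b with hS'
      have hS'sub : S' ⊆ S := Finset.Subset.trans (Finset.erase_subset _ _) (Finset.erase_subset _ _)
      have hmemS' : ∀ c, c ∈ S' ↔ c ≠ b ∧ c ≠ a ∧ c ∈ S := by
        intro c
        simp [hS', Finset.mem_erase, and_assoc]
      have hfR : S'.filter (fun p => m < p 0) = (S.filter fun p => m < p 0).erase b := by
        ext c
        simp only [Finset.mem_filter, Finset.mem_erase, hmemS']
        constructor
        · rintro ⟨⟨h1, h2, h3⟩, h4⟩; exact ⟨h1, h3, h4⟩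
        · rintro ⟨h1, h2, h3⟩
          refine ⟨⟨h1, ?_, h2⟩, h3⟩
          rintro rfl; linarith
      have hfL : S'.filter (fun p => p 0 < m) = (S.filter fun p => p 0 < m).erase a := by
        ext c
        simp only [Finset.mem_filter, Finset.mem_erase, hmemS']
        constructor
        · rintro ⟨⟨h1, h2, h3⟩, h4⟩; exact ⟨h2, h3, h4⟩
        · rintro ⟨h1, h2, h3⟩
          refine ⟨⟨?_, h1, h2⟩, h3⟩
          rintro rfl; linarith
      have hRcard : (S'.filter fun p => m < p 0).card = k := by
        rw [hfR, Finset.card_erase_of_mem (Finset.mem_filter.2 ⟨hbS, hbm⟩), hR]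
        exact Nat.succ_sub_one k
      have hLcard : (S'.filter fun p => p 0 < m).card ≤ k + 1 := by
        rw [hfL, Finset.card_erase_of_mem (Finset.mem_filter.2 ⟨haS, ham⟩)]
        exact Nat.sub_le_iff_le_add.2 hL
      obtain ⟨𝒟', hc', hdisk', hcov', hsep'⟩ := ih S'
        (fun p hp q hq => hx p (hS'sub hp) q (hS'sub hq))
        (fun p hp => hm p (hS'sub hp)) hRcard hLcard
      refine ⟨insert D 𝒟', ?_, ?_, ?_, ?_⟩
      · calc (insert D 𝒟').card ≤ 𝒟'.card + 1 := Finset.card_insert_le _ _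
          _ ≤ k + 1 := Nat.add_le_add_right hc' 1
      · intro D' hD'
        rcases Finset.mem_insert.1 hD' with rfl | hD'
        · exact hD
        · exact hdisk' D' hD'
      · intro p hp hpm
        by_cases hpb : p = b
        · exact ⟨D, Finset.mem_insert_self _ _, hpb ▸ hbD⟩
        · have hpS' : p ∈ S' := (hmemS' p).2 ⟨hpb, fun h => by rw [h] at hpm; linarith, hp⟩
          obtain ⟨D', hD', hpD'⟩ := hcov' p hpS' hpm
          exact ⟨D', Finset.mem_insert_of_mem hD', hpD'⟩
      · intro p hp q hq hpq hiff
        by_cases hpa : p = a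
        · subst hpa
          have hql : q 0 < m := hiff.1 ham
          have hqS' : q ∈ S' := (hmemS' q).2
            ⟨fun h => by rw [h] at hql; linarith, fun h => hpq h.symm, hq⟩
          exact ⟨D, Finset.mem_insert_self _ _,
            Or.inl ⟨haD, hex q hq (fun h => hpq h.symm) (fun h => by rw [h] at hql; linarith)⟩⟩
        by_cases hqa : q = a
        · subst hqa
          have hpl : p 0 < m := hiff.2 ham
          exact ⟨D, Finset.mem_insert_self _ _,
            Or.inr ⟨haD, hex p hp hpa (fun h => by rw [h] at hpl; linarith)⟩⟩
        by_cases hpb : p = b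
        · subst hpb
          have hqr : m < q 0 := by
            rcases (hm q hq).lt_or_gt with h | h
            · exfalso; exact absurd (hiff.2 h) (by linarith)
            · exact h
          exact ⟨D, Finset.mem_insert_self _ _,
            Or.inl ⟨hbD, hex q hq hqa (fun h => hpq h.symm)⟩⟩
        by_cases hqb : q = b
        · subst hqb
          exact ⟨D, Finset.mem_insert_self _ _,
            Or.inr ⟨hbD, hex p hp hpa hpb⟩⟩
        · have hpS' : p ∈ S' := (hmemS' p).2 ⟨hpb, hpa, hp⟩
          have hqS' : q ∈ S' := (hmemS' q).2 ⟨hqb, hqa, hq⟩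
          obtain ⟨D', hD', hsep⟩ := hsep' p hpS' q hqS' hpq hiff
          exact ⟨D', Finset.mem_insert_of_mem hD', hsep⟩
    · -- left side empty: use singleton disks
      push_neg at hLne
      have hall : ∀ p ∈ S, m < p 0 := by
        intro p hp
        rcases (hm p hp).lt_or_gt with h | h
        · exfalso; linarith [hLne p hp]
        · exact h
      have hSfull : S.filter (fun p => m < p 0) = S := Finset.filter_true_of_mem hall
      refine ⟨S.image (fun p => (Metric.closedBall p 0 : Set Pt)), ?_, ?_, ?_, ?_⟩
      · calc (S.image _).card ≤ S.card := Finset.card_image_le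
          _ = k + 1 := by rw [← hR, hSfull]
      · intro D hD
        obtain ⟨p, _, rfl⟩ := Finset.mem_image.1 hD
        exact ⟨p, 0, le_refl _, rfl⟩
      · intro p hp _
        exact ⟨_, Finset.mem_image_of_mem _ hp, Metric.mem_closedBall_self (le_refl _)⟩
      · intro p hp q hq hpq _
        refine ⟨_, Finset.mem_image_of_mem _ hp, Or.inl ⟨Metric.mem_closedBall_self (le_refl _), ?_⟩⟩
        intro hqmem
        apply hpq
        have h1 : dist q p ≤ 0 := Metric.mem_closedBall.1 hqmem
        have h2 : dist q p = 0 := le_antisymm h1 dist_nonneg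
        exact (dist_eq_zero.1 h2).symm

lemma nth_cut : ∀ (n : ℕ) (X : Finset ℝ), X.card = n → ∀ c : ℕ, c ≤ n →
    ∃ m : ℝ, (∀ x ∈ X, x ≠ m) ∧ (X.filter (fun x => x < m)).card = c ∧
      (c < n → ∃ x ∈ X, m < x) := by
  intro n
  induction n with
  | zero =>
    intro X hX c hc
    interval_cases c
    refine ⟨0, ?_, ?_, ?_⟩
    · intro x hx
      exact absurd hx (by simp [Finset.card_eq_zero.1 hX])
    · rw [Finset.card_eq_zero.1 hX]; simp
    · omega
  | succ n ih =>
    intro X hX c hc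
    have hXne : X.Nonempty := by rw [← Finset.card_pos, hX]; omega
    set M := X.max' hXne with hM
    by_cases hcn : c = n + 1
    · subst hcn
      refine ⟨M + 1, ?_, ?_, ?_⟩
      · intro x hx
        have := X.le_max' x hx
        linarith
      · rw [Finset.filter_true_of_mem (fun x hx => by linarith [X.le_max' x hx]), hX]
      · omega
    · have hcle : c ≤ n := by omega
      set X' := X.erase M with hX'
      have hMX : M ∈ X := X.max'_mem hXne
      have hX'card : X'.card = n := by
        rw [hX', Finset.card_erase_of_mem hMX, hX]
        exact Nat.succ_sub_one n
      by_cases hceq : c = n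
      · subst hceq
        rcases Finset.eq_empty_or_nonempty X' with hE | hne'
        · -- X = {M}, c = 0
          have hc0 : c = 0 := by
            have := hX'card
            rw [hE] at this
            simp at this
            omega
          subst hc0
          have hXM : ∀ x ∈ X, x = M := by
            intro x hx
            by_contra hne
            have : x ∈ X' := Finset.mem_erase.2 ⟨hne, hx⟩
            rw [hE] at this
            simp at this
          refine ⟨M - 1, ?_, ?_, ?_⟩
          · intro x hx
            rw [hXM x hx]
            intro h; linarith
          · rw [Finset.card_eq_zero]
            rw [Finset.filter_eq_empty_iff]
            intro x hx
            rw [hXM x hx]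
            intro h; linarith
          · intro _
            exact ⟨M, hMX, by linarith⟩
        · set M' := X'.max' hne' with hM'
          have hM'X : M' ∈ X := (Finset.erase_subset _ _) (X'.max'_mem hne')
          have hM'M : M' < M := lt_of_le_of_ne (X.le_max' M' hM'X)
            (Finset.ne_of_mem_erase (X'.max'_mem hne'))
          refine ⟨(M' + M)/2, ?_, ?_, ?_⟩
          · intro x hx
            by_cases hxM : x = M
            · subst hxM; intro h; linarith
            · have : x ∈ X' := Finset.mem_erase.2 ⟨hxM, hx⟩
              have h2 : x ≤ M' := X'.le_max' x this
              intro h; linarith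
          · have : X.filter (fun x => x < (M' + M)/2) = X' := by
              ext x
              simp only [Finset.mem_filter, hX', Finset.mem_erase]
              constructor
              · rintro ⟨h1, h2⟩
                exact ⟨fun h => by subst h; linarith, h1⟩
              · rintro ⟨h1, h2⟩
                have : x ∈ X' := Finset.mem_erase.2 ⟨h1, h2⟩
                have := X'.le_max' x this
                exact ⟨h2, by linarith⟩
            rw [this, hX'card]
          · intro _
            exact ⟨M, hMX, by linarith⟩
      · have hclt : c < n := by omega
        obtain ⟨m, hm1, hm2, hm3⟩ := ih X' hX'card c hcle
        obtain ⟨x0, hx0X', hx0⟩ := hm3 hclt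
        have hx0X : x0 ∈ X := (Finset.erase_subset _ _) hx0X'
        have hx0M : x0 ≤ M := X.le_max' x0 hx0X
        refine ⟨m, ?_, ?_, ?_⟩
        · intro x hx
          by_cases hxM : x = M
          · subst hxM; intro h; rw [← h] at hx0; linarith
          · exact hm1 x (Finset.mem_erase.2 ⟨hxM, hx⟩)
        · have : X.filter (fun x => x < m) = X'.filter (fun x => x < m) := by
            ext x
            simp only [Finset.mem_filter, hX', Finset.mem_erase]
            constructor
            · rintro ⟨h1, h2⟩
              refine ⟨⟨fun h => ?_, h1⟩, h2⟩
              subst h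
              linarith
            · rintro ⟨⟨h1, h2⟩, h3⟩
              exact ⟨h2, h3⟩
          rw [this, hm2]
        · intro _
          exact ⟨x0, hx0X, hx0⟩

lemma exists_halfplane (m : ℝ) (S : Finset Pt) (hm : ∀ p ∈ S, p 0 ≠ m) :
    ∃ H : Set Pt, IsDisk H ∧ ∀ p ∈ S, (p ∈ H ↔ p 0 < m) := by
  classical
  set G : Finset ℝ := insert (1:ℝ)
    (S.image fun p => ((p 0 - m)^2 + (p 1)^2) / (2 * (m - p 0))) with hG
  have hGne : G.Nonempty := ⟨1, Finset.mem_insert_self _ _⟩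
  set K : ℝ := G.max' hGne + 1 with hK
  have hK1 : (1:ℝ) < K := by
    have := Finset.le_max' G 1 (Finset.mem_insert_self _ _)
    linarith
  have hK0 : (0:ℝ) ≤ K := by linarith
  set z : Pt := mk2 (m - K) 0 with hz
  refine ⟨Metric.closedBall z K, ⟨z, K, hK0, rfl⟩, ?_⟩
  intro p hp
  rw [mem_disk z K hK0]
  simp only [hz, mk2_zero, mk2_one]
  constructor
  · intro h
    rcases (hm p hp).lt_or_gt with h1 | h1
    · exact h1
    · exfalso
      nlinarith [h, h1, hK1]
  · intro h1
    have hmemG : ((p 0 - m)^2 + (p 1)^2) / (2 * (m - p 0)) ∈ G := by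
      rw [hG]
      exact Finset.mem_insert_of_mem (Finset.mem_image_of_mem _ hp)
    have hle := Finset.le_max' G _ hmemG
    have hlt : ((p 0 - m)^2 + (p 1)^2) / (2 * (m - p 0)) < K := by linarith
    have hpos : 0 < 2 * (m - p 0) := by linarith
    have := (div_lt_iff₀ hpos).1 hlt
    nlinarith [this]


/-- A set of points with pairwise distinct x-coordinates can be identified with at
most `⌈(n+1)/2⌉` disks. -/
theorem upper_bound_distinct_abscissa (P : Finset Pt)
    (hx : ∀ p ∈ P, ∀ q ∈ P, p ≠ q → p 0 ≠ q 0) :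
    ∃ 𝒟 : Finset (Set Pt), (∀ D ∈ 𝒟, IsDisk D) ∧ Identifies 𝒟 P ∧
      𝒟.card ≤ (P.card + 2) / 2 := by
  classical
  set n := P.card with hn
  clear_value n
  rcases Nat.eq_zero_or_pos n with h0 | hpos
  · have hPe : P = ∅ := Finset.card_eq_zero.1 (hn ▸ h0)
    refine ⟨∅, by simp, ⟨?_, ?_⟩, by simp⟩
    · intro p hp; rw [hPe] at hp; simp at hp
    · intro p hp; rw [hPe] at hp; simp at hp
  · set c : ℕ := (n + 1) / 2 with hc
    clear_value c
    have hinj : Set.InjOn (fun p : Pt => p 0) ↑P := by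
      intro p hp q hq h
      by_contra hne
      exact hx p hp q hq hne h
    set X : Finset ℝ := P.image (fun p => p 0) with hX
    clear_value X
    have hXcard : X.card = n := by
      rw [hX, Finset.card_image_of_injOn hinj]
      exact hn.symm
    have hcn : c ≤ n := by omega
    obtain ⟨m, hm1, hm2, _⟩ := nth_cut n X hXcard c hcn
    have hmP : ∀ p ∈ P, p 0 ≠ m := fun p hp =>
      hm1 (p 0) (hX ▸ Finset.mem_image_of_mem _ hp)
    have hfP : (P.filter fun p => p 0 < m).card = c := by
      have himg : X.filter (fun x => x < m) = (P.filter fun p => p 0 < m).image (fun p => p 0) := by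
        rw [hX, Finset.filter_image]
      rw [himg] at hm2
      rw [← hm2]
      rw [Finset.card_image_of_injOn
        (hinj.mono (by intro p hp; exact Finset.mem_of_mem_filter p hp))]
    have hfR : (P.filter fun p => m < p 0).card = n - c := by
      have hsum := Finset.card_filter_add_card_filter_not
        (s := P) (p := fun p => p 0 < m)
      have hcongr : P.filter (fun p => ¬ p 0 < m) = P.filter (fun p => m < p 0) := by
        apply Finset.filter_congr
        intro p hp
        constructor
        · intro h
          exact lt_of_le_of_ne (not_lt.1 h) (Ne.symm (hmP p hp))
        · intro h; exact not_lt.2 (le_of_lt h)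
      rw [hcongr, hfP] at hsum
      rw [← hn] at hsum
      set R : ℕ := (P.filter fun p => m < p 0).card with hRdef
      clear_value R
      clear * - hsum hc hpos hn
      omega
    have hLle : (P.filter fun p => p 0 < m).card ≤ (n - c) + 1 := by
      rw [hfP]
      clear * - hc hpos hn
      omega
    obtain ⟨𝒟', hcard', hdisk', hcov', hsep'⟩ := step m (n - c) P hx hmP hfR hLle
    obtain ⟨H, hHdisk, hHmem⟩ := exists_halfplane m P hmP
    refine ⟨insert H 𝒟', ?_, ⟨?_, ?_⟩, ?_⟩
    · intro D hD
      rcases Finset.mem_insert.1 hD with rfl | hD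
      · exact hHdisk
      · exact hdisk' D hD
    · intro p hp
      rcases (hmP p hp).lt_or_gt with h | h
      · exact ⟨H, Finset.mem_insert_self _ _, (hHmem p hp).2 h⟩
      · obtain ⟨D, hD, hpD⟩ := hcov' p hp h
        exact ⟨D, Finset.mem_insert_of_mem hD, hpD⟩
    · intro p hp q hq hpq
      by_cases hiff : (p 0 < m) ↔ (q 0 < m)
      · obtain ⟨D, hD, hsep⟩ := hsep' p hp q hq hpq hiff
        exact ⟨D, Finset.mem_insert_of_mem hD, hsep⟩
      · by_cases hpl : p 0 < m
        · have hql : ¬ q 0 < m := fun hql => hiff (iff_of_true hpl hql)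
          exact ⟨H, Finset.mem_insert_self _ _,
            Or.inl ⟨(hHmem p hp).2 hpl, fun hmem => hql ((hHmem q hq).1 hmem)⟩⟩
        · have hql : q 0 < m := by
            by_contra hql
            exact hiff (iff_of_false hpl hql)
          exact ⟨H, Finset.mem_insert_self _ _,
            Or.inr ⟨(hHmem q hq).2 hql, fun hmem => hpl ((hHmem p hp).1 hmem)⟩⟩
    · calc (insert H 𝒟').card ≤ 𝒟'.card + 1 := Finset.card_insert_le _ _
        _ ≤ (n - c) + 1 := Nat.add_le_add_right hcard' 1
        _ ≤ (n + 2) / 2 := by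
          clear * - hc hpos hn
          omega
end
end

section
/- Let P be a set of n points on the half-parabola {(x, x²) : x ≥ 0}. Then any set of disks identifying P has size at least n/3. -/
noncomputable section

/-- A monic quartic with zero cubic coefficient (arising from intersecting a circle
with the parabola) cannot have four distinct positive roots. -/
lemma four_roots_absurd (a b c r1 r2 r3 r4 : ℝ)
    (h1 : (r1 - a) ^ 2 + (r1 ^ 2 - b) ^ 2 = c)
    (h2 : (r2 - a) ^ 2 + (r2 ^ 2 - b) ^ 2 = c)
    (h3 : (r3 - a) ^ 2 + (r3 ^ 2 - b) ^ 2 = c)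
    (h4 : (r4 - a) ^ 2 + (r4 ^ 2 - b) ^ 2 = c)
    (h12 : r1 ≠ r2) (h13 : r1 ≠ r3) (h14 : r1 ≠ r4)
    (h23 : r2 ≠ r3) (h24 : r2 ≠ r4) (h34 : r3 ≠ r4)
    (p1 : 0 < r1) (p2 : 0 < r2) (p3 : 0 < r3) (p4 : 0 < r4) : False := by
  have key : (r1 + r2 + r3 + r4) *
      ((r1 - r2) * (r1 - r3) * (r1 - r4) * (r2 - r3) * (r2 - r4) * (r3 - r4)) = 0 := by
    linear_combination ((r2 - r3) * (r2 - r4) * (r3 - r4)) * h1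
      - ((r1 - r3) * (r1 - r4) * (r3 - r4)) * h2
      + ((r1 - r2) * (r1 - r4) * (r2 - r4)) * h3
      - ((r1 - r2) * (r1 - r3) * (r2 - r3)) * h4
  have hD : ((r1 - r2) * (r1 - r3) * (r1 - r4) * (r2 - r3) * (r2 - r4) * (r3 - r4)) ≠ 0 := by
    apply_rules [mul_ne_zero, sub_ne_zero_of_ne]
  have hsum : r1 + r2 + r3 + r4 = 0 := by
    rcases mul_eq_zero.mp key with h | h
    · exact h
    · exact absurd h hD
  linarith

/-- Any set of disks identifying `n` points on the half-parabola has size at least `n/3`. -/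
theorem halfparabola_lower_bound (P : Finset Pt)
    (hP : ∀ p ∈ P, ∃ x : ℝ, 0 ≤ x ∧ p = (WithLp.toLp 2 ![x, x ^ 2] : Pt))
    (𝒟 : Finset (Set Pt)) (hD : ∀ D ∈ 𝒟, IsDisk D) (hI : Identifies 𝒟 P) :
    (P.card : ℝ) / 3 ≤ (𝒟.card : ℝ) := by
  classical
  set n := P.card with hn
  rcases Nat.eq_zero_or_pos n with h0 | hpos
  · rw [h0]
    norm_num
  -- points of `P` are determined by their first coordinate
  have hcoord : ∀ p ∈ P, p = (WithLp.toLp 2 ![p 0, p 0 ^ 2] : Pt) ∧ 0 ≤ p 0 := by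
    intro p hp
    obtain ⟨x, hx, rfl⟩ := hP p hp
    have hx0 : (WithLp.toLp 2 ![x, x ^ 2] : Pt) 0 = x := rfl
    rw [hx0]
    exact ⟨rfl, hx⟩
  have hinjOn : Set.InjOn (fun p : Pt => p 0) P := by
    intro p hp q hq h
    have h1 := (hcoord p hp).1
    have h2 := (hcoord q hq).1
    rw [h1, h2]
    simp only at h
    rw [h]
  -- the sorted list of first coordinates
  set X : Finset ℝ := P.image (fun p => p 0) with hX
  have hXcard : X.card = n := Finset.card_image_of_injOn hinjOn
  set L : List ℝ := X.sort (· ≤ ·) with hL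
  have hlen : L.length = n := by rw [hL, Finset.length_sort, hXcard]
  set xs : ℕ → ℝ := fun j => L.getD j 0 with hxs
  have hxs_mem : ∀ j, j < n → xs j ∈ X := by
    intro j hj
    have hj' : j < L.length := by omega
    have h1 : xs j = L[j] := List.getD_eq_getElem L 0 hj'
    have h2 : L[j] ∈ L := List.getElem_mem hj'
    rw [h1]
    exact (Finset.mem_sort (α := ℝ) (· ≤ ·)).mp h2
  have hxs_strict : ∀ j k, j < k → k < n → xs j < xs k := by
    intro j k hjk hk
    have hsor : List.Pairwise (· < ·) L := (Finset.sortedLT_sort X).pairwise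
    have hk' : k < L.length := by omega
    have hj' : j < L.length := by omega
    have := (List.pairwise_iff_getElem.mp hsor) j k hj' hk' hjk
    rw [hxs]
    simp only
    rw [List.getD_eq_getElem L 0 hj', List.getD_eq_getElem L 0 hk']
    exact this
  have hxs_le : ∀ j k, j ≤ k → k < n → xs j ≤ xs k := by
    intro j k hjk hk
    rcases eq_or_lt_of_le hjk with rfl | h
    · exact le_refl _
    · exact le_of_lt (hxs_strict j k h hk)
  have hxs_nonneg : ∀ j, j < n → 0 ≤ xs j := by
    intro j hj
    obtain ⟨p, hp, hpx⟩ := Finset.mem_image.mp (hxs_mem j hj)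
    rw [← hpx]
    exact (hcoord p hp).2
  have hpts_mem : ∀ j, j < n → (WithLp.toLp 2 ![xs j, xs j ^ 2] : Pt) ∈ P := by
    intro j hj
    obtain ⟨p, hp, hpx⟩ := Finset.mem_image.mp (hxs_mem j hj)
    have h1 := (hcoord p hp).1
    rw [← hpx, ← h1]
    exact hp
  have hpts_ne : ∀ j k, j < k → k < n → (WithLp.toLp 2 ![xs j, xs j ^ 2] : Pt) ≠ (WithLp.toLp 2 ![xs k, xs k ^ 2] : Pt) := by
    intro j k hjk hk h
    have h0 : xs j = xs k := congrArg (fun v : Pt => v 0) h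
    exact absurd h0 (ne_of_lt (hxs_strict j k hjk hk))
  -- the charged disk for each index
  have hsep : ∀ j, j + 1 < n → ∃ D ∈ 𝒟,
      ((WithLp.toLp 2 ![xs j, xs j ^ 2] : Pt) ∈ D ∧ (WithLp.toLp 2 ![xs (j+1), xs (j+1) ^ 2] : Pt) ∉ D) ∨
      ((WithLp.toLp 2 ![xs (j+1), xs (j+1) ^ 2] : Pt) ∈ D ∧ (WithLp.toLp 2 ![xs j, xs j ^ 2] : Pt) ∉ D) := by
    intro j hj
    exact hI.2 _ (hpts_mem j (by omega)) _ (hpts_mem (j+1) hj) (hpts_ne j (j+1) (by omega) hj)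
  have hcov : ∀ j, j < n → ∃ D ∈ 𝒟, (WithLp.toLp 2 ![xs j, xs j ^ 2] : Pt) ∈ D :=
    fun j hj => hI.1 _ (hpts_mem j hj)
  set f : Fin n → Set Pt := fun i =>
    if h : i.1 + 1 < n then (hsep i.1 h).choose else (hcov i.1 i.2).choose with hf
  have hfmem : ∀ i, f i ∈ 𝒟 := by
    intro i
    show (if h : i.1 + 1 < n then (hsep i.1 h).choose else (hcov i.1 i.2).choose) ∈ 𝒟
    split
    next h => exact (hsep i.1 h).choose_spec.1
    next h => exact (hcov i.1 i.2).choose_spec.1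
  -- the fiber bound: each disk is charged at most 3 times
  have hfiber : ∀ D ∈ 𝒟, (Finset.univ.filter (fun i => f i = D)).card ≤ 3 := by
    intro D hDmem
    by_contra hlt
    push_neg at hlt
    obtain ⟨cc, r, hr, rfl⟩ := hD D hDmem
    set q : ℝ → ℝ := fun x => (x - cc 0) ^ 2 + (x ^ 2 - cc 1) ^ 2 - r ^ 2 with hq
    have hmemq : ∀ x : ℝ, ((WithLp.toLp 2 ![x, x ^ 2] : Pt) ∈ Metric.closedBall cc r ↔ q x ≤ 0) := by
      intro x
      rw [hq]
      simp only
      simp only [Metric.mem_closedBall]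
      rw [EuclideanSpace.dist_eq, Fin.sum_univ_two]
      simp only [Matrix.cons_val_zero, Matrix.cons_val_one, Matrix.head_cons, Real.dist_eq, sq_abs]
      constructor
      · intro h
        have h2 : Real.sqrt ((x - cc 0) ^ 2 + (x ^ 2 - cc 1) ^ 2) ≤ Real.sqrt (r ^ 2) := by
          rwa [Real.sqrt_sq hr]
        have h3 := (Real.sqrt_le_sqrt_iff (by positivity)).mp h2
        linarith
      · intro h
        have h2 : Real.sqrt ((x - cc 0) ^ 2 + (x ^ 2 - cc 1) ^ 2) ≤ Real.sqrt (r ^ 2) :=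
          Real.sqrt_le_sqrt (by linarith)
        rwa [Real.sqrt_sq hr] at h2
    set X0 : ℝ := max (xs (n - 1) + 1) (cc 0 + r + 1) with hX0
    set ys : ℕ → ℝ := fun j => if j < n then xs j else X0 with hys
    have hys_eq : ∀ j, j < n → ys j = xs j := by
      intro j hj; rw [hys]; simp only [if_pos hj]
    have hysn : ys n = X0 := by rw [hys]; simp
    have hys_lt : ∀ j k, j < k → k ≤ n → ys j < ys k := by
      intro j k hjk hk
      rcases lt_or_eq_of_le hk with hk' | heq
      · rw [hys_eq j (by omega), hys_eq k hk']
        exact hxs_strict j k hjk hk'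
      · rw [hys_eq j (by omega), heq, hysn]
        have h1 : xs j ≤ xs (n - 1) := hxs_le j (n - 1) (by omega) (by omega)
        have h2 : xs (n - 1) + 1 ≤ X0 := le_max_left _ _
        linarith
    have hys_le : ∀ j k, j ≤ k → k ≤ n → ys j ≤ ys k := by
      intro j k hjk hk
      rcases eq_or_lt_of_le hjk with rfl | h
      · exact le_refl _
      · exact le_of_lt (hys_lt j k h hk)
    have hqX0 : 0 < q X0 := by
      have h1 : cc 0 + r + 1 ≤ X0 := le_max_right _ _
      rw [hq]
      simp only
      nlinarith [sq_nonneg (X0 ^ 2 - cc 1), hr]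
    -- every charged index is a flip of the membership sequence
    set s : Finset (Fin n) := Finset.univ.filter (fun i => f i = Metric.closedBall cc r) with hs
    have hflip : ∀ i ∈ s, (q (ys i.1) ≤ 0 ∧ 0 < q (ys (i.1 + 1))) ∨
        (0 < q (ys i.1) ∧ q (ys (i.1 + 1)) ≤ 0) := by
      intro i hi
      rw [hs, Finset.mem_filter] at hi
      have hfi := hi.2
      rw [hf] at hfi
      simp only at hfi
      by_cases h : i.1 + 1 < n
      · rw [dif_pos h] at hfi
        have hspec := (hsep i.1 h).choose_spec.2
        rw [hfi] at hspec
        rw [hys_eq i.1 i.2, hys_eq (i.1 + 1) h]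
        rcases hspec with ⟨ha, hb⟩ | ⟨ha, hb⟩
        · left
          refine ⟨(hmemq _).mp ha, ?_⟩
          have := fun hq' => hb ((hmemq _).mpr hq')
          exact lt_of_not_ge this
        · right
          refine ⟨?_, (hmemq _).mp ha⟩
          have := fun hq' => hb ((hmemq _).mpr hq')
          exact lt_of_not_ge this
      · rw [dif_neg h] at hfi
        have hspec := (hcov i.1 i.2).choose_spec.2
        rw [hfi] at hspec
        have hin : i.1 + 1 = n := by omega
        left
        rw [hys_eq i.1 i.2, hin, hysn]
        exact ⟨(hmemq _).mp hspec, hqX0⟩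
    -- a positive slack below all strictly positive values
    have hne' : (Finset.range (n + 1)).Nonempty := by
      rw [Finset.nonempty_range_iff]; omega
    set m : ℝ := (Finset.range (n + 1)).inf' hne' (fun j => if 0 < q (ys j) then q (ys j) else 1)
      with hm
    have hm_pos : 0 < m := by
      rw [hm, Finset.lt_inf'_iff]
      intro j hj
      split
      · assumption
      · norm_num
    have hm_le : ∀ j, j ≤ n → 0 < q (ys j) → m ≤ q (ys j) := by
      intro j hj hq'
      have h1 : m ≤ (fun j => if 0 < q (ys j) then q (ys j) else 1) j :=
        Finset.inf'_le _ (Finset.mem_range.mpr (by omega))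
      simp only [if_pos hq'] at h1
      exact h1
    set ε : ℝ := m / 2 with hε
    clear_value ε
    clear_value m
    have hε_pos : 0 < ε := by rw [hε]; linarith
    have hε_lt : ∀ j, j ≤ n → 0 < q (ys j) → ε < q (ys j) := by
      intro j hj hq'
      have h3 := hm_le j hj hq'
      have h2 : m / 2 < m := by linarith
      rw [hε]
      exact lt_of_lt_of_le h2 h3
    -- a root of q - ε strictly between consecutive charged points
    have hcont : Continuous (fun x => q x - ε) := by
      rw [hq]; fun_prop
    have hroot : ∀ i ∈ s, ∃ z, ys i.1 < z ∧ z < ys (i.1 + 1) ∧ q z = ε := by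
      intro i hi
      have hle : ys i.1 ≤ ys (i.1 + 1) :=
        le_of_lt (hys_lt i.1 (i.1 + 1) (by omega) (by omega))
      rcases hflip i hi with ⟨ha, hb⟩ | ⟨ha, hb⟩
      · have h1 : q (ys i.1) - ε < 0 := by linarith
        have h2 : 0 < q (ys (i.1 + 1)) - ε := by
          have := hε_lt (i.1 + 1) (by omega) hb; linarith
        have himg := intermediate_value_Ioo hle hcont.continuousOn
        obtain ⟨z, hz, hz0⟩ := himg ⟨h1, h2⟩
        have hz0' : q z - ε = 0 := hz0
        exact ⟨z, hz.1, hz.2, by linarith⟩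
      · have h1 : 0 < q (ys i.1) - ε := by
          have := hε_lt i.1 (by omega) ha; linarith
        have h2 : q (ys (i.1 + 1)) - ε < 0 := by linarith
        have himg := intermediate_value_Ioo' hle hcont.continuousOn
        obtain ⟨z, hz, hz0⟩ := himg ⟨h2, h1⟩
        have hz0' : q z - ε = 0 := hz0
        exact ⟨z, hz.1, hz.2, by linarith⟩
    choose! z hz1 hz2 hz3 using hroot
    -- roots are positive and ordered
    have hz_pos : ∀ i ∈ s, 0 < z i := by
      intro i hi
      have h0 : 0 ≤ ys i.1 := by rw [hys_eq i.1 i.2]; exact hxs_nonneg i.1 i.2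
      have := hz1 i hi
      linarith
    have hz_lt : ∀ i ∈ s, ∀ j ∈ s, i.1 < j.1 → z i < z j := by
      intro i hi j hj hij
      have h1 : z i < ys (i.1 + 1) := hz2 i hi
      have h2 : ys (i.1 + 1) ≤ ys j.1 := hys_le (i.1 + 1) j.1 (by omega) (by omega)
      have h3 : ys j.1 < z j := hz1 j hj
      linarith
    have hz_ne : ∀ i ∈ s, ∀ j ∈ s, i ≠ j → z i ≠ z j := by
      intro i hi j hj hij
      rcases lt_or_gt_of_ne (fun h => hij (Fin.val_injective h)) with h | h
      · exact ne_of_lt (hz_lt i hi j hj h)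
      · exact ne_of_gt (hz_lt j hj i hi h)
    -- extract four distinct charged indices
    have hcard : 4 ≤ s.card := hlt
    obtain ⟨i1, hi1⟩ := Finset.card_pos.mp (by omega : 0 < s.card)
    have hc1 : 3 ≤ (s.erase i1).card := by
      rw [Finset.card_erase_of_mem hi1]; omega
    obtain ⟨i2, hi2⟩ := Finset.card_pos.mp (by omega : 0 < (s.erase i1).card)
    have hc2 : 2 ≤ ((s.erase i1).erase i2).card := by
      rw [Finset.card_erase_of_mem hi2]; omega
    obtain ⟨i3, hi3⟩ := Finset.card_pos.mp (by omega : 0 < ((s.erase i1).erase i2).card)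
    have hc3 : 1 ≤ (((s.erase i1).erase i2).erase i3).card := by
      rw [Finset.card_erase_of_mem hi3]; omega
    obtain ⟨i4, hi4⟩ := Finset.card_pos.mp (by omega : 0 < (((s.erase i1).erase i2).erase i3).card)
    have hm2 : i2 ∈ s := Finset.mem_of_mem_erase hi2
    have hm3 : i3 ∈ s := Finset.mem_of_mem_erase (Finset.mem_of_mem_erase hi3)
    have hm4 : i4 ∈ s :=
      Finset.mem_of_mem_erase (Finset.mem_of_mem_erase (Finset.mem_of_mem_erase hi4))
    have hne12 : i2 ≠ i1 := Finset.ne_of_mem_erase hi2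
    have hne13 : i3 ≠ i1 := Finset.ne_of_mem_erase (Finset.mem_of_mem_erase hi3)
    have hne23 : i3 ≠ i2 := Finset.ne_of_mem_erase hi3
    have hne14 : i4 ≠ i1 :=
      Finset.ne_of_mem_erase (Finset.mem_of_mem_erase (Finset.mem_of_mem_erase hi4))
    have hne24 : i4 ≠ i2 := Finset.ne_of_mem_erase (Finset.mem_of_mem_erase hi4)
    have hne34 : i4 ≠ i3 := Finset.ne_of_mem_erase hi4
    -- the four roots give a contradiction
    have heq : ∀ i ∈ s, (z i - cc 0) ^ 2 + ((z i) ^ 2 - cc 1) ^ 2 = r ^ 2 + ε := by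
      intro i hi
      have h := hz3 i hi
      rw [hq] at h
      simp only at h
      linarith
    exact four_roots_absurd (cc 0) (cc 1) (r ^ 2 + ε) (z i1) (z i2) (z i3) (z i4)
      (heq i1 hi1) (heq i2 hm2) (heq i3 hm3) (heq i4 hm4)
      (hz_ne i1 hi1 i2 hm2 (Ne.symm hne12)) (hz_ne i1 hi1 i3 hm3 (Ne.symm hne13))
      (hz_ne i1 hi1 i4 hm4 (Ne.symm hne14)) (hz_ne i2 hm2 i3 hm3 (Ne.symm hne23))
      (hz_ne i2 hm2 i4 hm4 (Ne.symm hne24)) (hz_ne i3 hm3 i4 hm4 (Ne.symm hne34))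
      (hz_pos i1 hi1) (hz_pos i2 hm2) (hz_pos i3 hm3) (hz_pos i4 hm4)
  -- conclude by counting
  have hcount : n ≤ 3 * 𝒟.card := by
    have h := Finset.card_le_mul_card_image_of_maps_to
      (f := f) (s := Finset.univ) (t := 𝒟) (fun i _ => hfmem i) 3 hfiber
    rwa [Finset.card_univ, Fintype.card_fin] at h
  rw [div_le_iff₀ (by norm_num : (0:ℝ) < 3)]
  have : (n : ℝ) ≤ 3 * (𝒟.card : ℝ) := by exact_mod_cast hcount
  linarith
end
end

section
/- Let x₁ < ⋯ < xₙ be n collinear points (n odd, n = 2p+1 with p ≥ 1) with all consecutive gaps x_{i+1} − x_i ≤ 2r. If for some i ∈ {1,…,p−1} the distance x_{2i+2} − x_{2i} > 2r, then no set of p+1 disks of radius r identifies the points, i.e., any identifying set of radius-r disks has size at least p+2. -/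
noncomputable section

instance : DecidableEq Pt := Classical.decEq _

open Finset
private lemma three_sorted {P : ℕ → Prop} {a b c : ℕ} (hab : a ≠ b) (hac : a ≠ c) (hbc : b ≠ c)
    (ha : P a) (hb : P b) (hc : P c) :
    ∃ j k l, j < k ∧ k < l ∧ P j ∧ P k ∧ P l := by
  rcases Nat.lt_or_ge a b with h1 | h1 <;> rcases Nat.lt_or_ge b c with h2 | h2 <;>
    rcases Nat.lt_or_ge a c with h3 | h3
  all_goals first
    | exact ⟨a, b, c, by omega, by omega, ha, hb, hc⟩
    | exact ⟨a, c, b, by omega, by omega, ha, hc, hb⟩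
    | exact ⟨b, a, c, by omega, by omega, hb, ha, hc⟩
    | exact ⟨b, c, a, by omega, by omega, hb, hc, ha⟩
    | exact ⟨c, a, b, by omega, by omega, hc, ha, hb⟩
    | exact ⟨c, b, a, by omega, by omega, hc, hb, ha⟩

private lemma block_bound {α : Type*} [DecidableEq α] (a b : ℕ) (hab : a < b)
    (𝒟 : Finset α) (M : α → ℕ → Prop) [∀ D j, Decidable (M D j)]
    (hconv : ∀ D ∈ 𝒟, ∀ j k l, a ≤ j → j ≤ k → k ≤ l → l ≤ b → M D j → M D l → M D k)
    (hcova : ∃ D ∈ 𝒟, M D a) (hcovb : ∃ D ∈ 𝒟, M D b)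
    (hcut : ∀ j, a ≤ j → j < b → ∃ D ∈ 𝒟, (M D j ∧ ¬ M D (j+1)) ∨ (M D (j+1) ∧ ¬ M D j)) :
    b - a + 2 ≤ 2 * 𝒟.card := by
  classical
  set cuts : α → Finset ℕ :=
    fun D => (Icc a (b-1)).filter (fun j => (M D j ∧ ¬ M D (j+1)) ∨ (M D (j+1) ∧ ¬ M D j))
    with hcuts
  -- every gap is cut
  have hsub : Icc a (b-1) ⊆ 𝒟.biUnion cuts := by
    intro j hj
    rw [mem_Icc] at hj
    obtain ⟨D, hD, hDc⟩ := hcut j hj.1 (by omega)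
    exact mem_biUnion.2 ⟨D, hD, mem_filter.2 ⟨mem_Icc.2 hj, hDc⟩⟩
  have hstep1 : b - a ≤ ∑ D ∈ 𝒟, (cuts D).card := by
    calc b - a = (Icc a (b-1)).card := by rw [Nat.card_Icc]; omega
    _ ≤ (𝒟.biUnion cuts).card := card_le_card hsub
    _ ≤ ∑ D ∈ 𝒟, (cuts D).card := card_biUnion_le
  -- basic facts about cut membership
  have hmem : ∀ D j, j ∈ cuts D →
      a ≤ j ∧ j + 1 ≤ b ∧ ((M D j ∧ ¬ M D (j+1)) ∨ (M D (j+1) ∧ ¬ M D j)) := by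
    intro D j hj
    rw [hcuts, mem_filter, mem_Icc] at hj
    exact ⟨hj.1.1, by omega, hj.2⟩
  -- at most two cuts per disk
  have hle2 : ∀ D ∈ 𝒟, (cuts D).card ≤ 2 := by
    intro D hD
    by_contra hlt
    have hlt' : 2 < (cuts D).card := by omega
    obtain ⟨u, hu, v, hv, w, hw, huv, huw, hvw⟩ := Finset.two_lt_card.1 hlt'
    obtain ⟨j, k, l, hjk, hkl, hj, hk, hl⟩ :=
      three_sorted (P := fun t => t ∈ cuts D) huv huw hvw hu hv hw
    obtain ⟨haj, hjb, hcj⟩ := hmem D j hj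
    obtain ⟨hak, hkb, hck⟩ := hmem D k hk
    obtain ⟨hal, hlb, hcl⟩ := hmem D l hl
    rcases hck with ⟨hk1, hk2⟩ | ⟨hk1, hk2⟩
    · rcases hcl with ⟨hl1, hl2⟩ | ⟨hl1, hl2⟩
      · exact hk2 (hconv D hD k (k+1) l hak (by omega) (by omega) (by omega) hk1 hl1)
      · exact hk2 (hconv D hD k (k+1) (l+1) hak (by omega) (by omega) (by omega) hk1 hl1)
    · rcases hcj with ⟨hj1, hj2⟩ | ⟨hj1, hj2⟩
      · exact hk2 (hconv D hD j k (k+1) haj (by omega) (by omega) (by omega) hj1 hk1)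
      · exact hk2 (hconv D hD (j+1) k (k+1) (by omega) (by omega) (by omega) (by omega) hj1 hk1)
  -- at most one cut for a disk covering an endpoint
  have key1 : ∀ D ∈ 𝒟, M D a → ∀ u v, u ∈ cuts D → v ∈ cuts D → u < v → False := by
    intro D hD hMa u v hu hv h
    obtain ⟨hau, hub, hcu⟩ := hmem D u hu
    obtain ⟨hav, hvb, hcv⟩ := hmem D v hv
    have hMu : M D u ∧ ¬ M D (u+1) := by
      rcases hcu with h' | ⟨h1, h2⟩
      · exact h'
      · exact absurd (hconv D hD a u (u+1) le_rfl hau (by omega) (by omega) hMa h1) h2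
    rcases hcv with ⟨h1, h2⟩ | ⟨h1, h2⟩
    · exact hMu.2 (hconv D hD u (u+1) v hau (by omega) (by omega) (by omega) hMu.1 h1)
    · exact hMu.2 (hconv D hD u (u+1) (v+1) hau (by omega) (by omega) (by omega) hMu.1 h1)
  have key2 : ∀ D ∈ 𝒟, M D b → ∀ u v, u ∈ cuts D → v ∈ cuts D → u < v → False := by
    intro D hD hMb u v hu hv h
    obtain ⟨hau, hub, hcu⟩ := hmem D u hu
    obtain ⟨hav, hvb, hcv⟩ := hmem D v hv
    have hMv : M D (v+1) ∧ ¬ M D v := by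
      rcases hcv with ⟨h1, h2⟩ | h'
      · exact absurd (hconv D hD v (v+1) b hav (by omega) (by omega) le_rfl h1 hMb) h2
      · exact h'
    rcases hcu with ⟨h1, h2⟩ | ⟨h1, h2⟩
    · exact hMv.2 (hconv D hD u v (v+1) hau (by omega) (by omega) (by omega) h1 hMv.1)
    · exact hMv.2 (hconv D hD (u+1) v (v+1) (by omega) (by omega) (by omega) (by omega) h1 hMv.1)
  have hle1a : ∀ D ∈ 𝒟, M D a → (cuts D).card ≤ 1 := by
    intro D hD hMa
    by_contra hlt
    have hlt' : 1 < (cuts D).card := by omega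
    obtain ⟨u, hu, v, hv, huv⟩ := Finset.one_lt_card.1 hlt'
    rcases Nat.lt_or_ge u v with h | h
    · exact key1 D hD hMa u v hu hv h
    · exact key1 D hD hMa v u hv hu (by omega)
  have hle1b : ∀ D ∈ 𝒟, M D b → (cuts D).card ≤ 1 := by
    intro D hD hMb
    by_contra hlt
    have hlt' : 1 < (cuts D).card := by omega
    obtain ⟨u, hu, v, hv, huv⟩ := Finset.one_lt_card.1 hlt'
    rcases Nat.lt_or_ge u v with h | h
    · exact key2 D hD hMb u v hu hv h
    · exact key2 D hD hMb v u hv hu (by omega)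
  have hle0 : ∀ D ∈ 𝒟, M D a → M D b → (cuts D).card = 0 := by
    intro D hD hMa hMb
    rw [Finset.card_eq_zero]
    apply Finset.filter_eq_empty_iff.2
    intro j hj
    rw [mem_Icc] at hj
    have h1 : M D j := hconv D hD a j b le_rfl hj.1 (by omega) le_rfl hMa hMb
    have h2 : M D (j+1) := hconv D hD a (j+1) b le_rfl (by omega) (by omega) le_rfl hMa hMb
    push_neg
    exact ⟨fun _ => h2, fun _ => h1⟩
  obtain ⟨D₁, hD₁, hMa⟩ := hcova
  obtain ⟨D₂, hD₂, hMb⟩ := hcovb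
  by_cases heq : D₁ = D₂
  · subst heq
    have hzero : (cuts D₁).card = 0 := hle0 D₁ hD₁ hMa hMb
    have hsum : ∑ D ∈ 𝒟, (cuts D).card = (cuts D₁).card + ∑ D ∈ 𝒟.erase D₁, (cuts D).card :=
      (Finset.add_sum_erase 𝒟 _ hD₁).symm
    have hrest : ∑ D ∈ 𝒟.erase D₁, (cuts D).card ≤ (𝒟.erase D₁).card * 2 := by
      simpa [smul_eq_mul] using
        Finset.sum_le_card_nsmul (𝒟.erase D₁) (fun D => (cuts D).card) 2
          (fun D hDe => hle2 D (Finset.mem_of_mem_erase hDe))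
    have hcard : (𝒟.erase D₁).card = 𝒟.card - 1 := Finset.card_erase_of_mem hD₁
    have hpos : 1 ≤ 𝒟.card := Finset.card_pos.2 ⟨D₁, hD₁⟩
    omega
  · have hD₂' : D₂ ∈ 𝒟.erase D₁ := Finset.mem_erase.2 ⟨Ne.symm heq, hD₂⟩
    have hsum : ∑ D ∈ 𝒟, (cuts D).card = (cuts D₁).card + ∑ D ∈ 𝒟.erase D₁, (cuts D).card :=
      (Finset.add_sum_erase 𝒟 _ hD₁).symm
    have hsum2 : ∑ D ∈ 𝒟.erase D₁, (cuts D).card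
        = (cuts D₂).card + ∑ D ∈ (𝒟.erase D₁).erase D₂, (cuts D).card :=
      (Finset.add_sum_erase _ _ hD₂').symm
    have hrest : ∑ D ∈ (𝒟.erase D₁).erase D₂, (cuts D).card ≤ ((𝒟.erase D₁).erase D₂).card * 2 := by
      simpa [smul_eq_mul] using
        Finset.sum_le_card_nsmul ((𝒟.erase D₁).erase D₂) (fun D => (cuts D).card) 2
          (fun D hDe => hle2 D (Finset.mem_of_mem_erase (Finset.mem_of_mem_erase hDe)))
    have h1 : (cuts D₁).card ≤ 1 := hle1a D₁ hD₁ hMa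
    have h2 : (cuts D₂).card ≤ 1 := hle1b D₂ hD₂ hMb
    have hcard : ((𝒟.erase D₁).erase D₂).card = 𝒟.card - 2 := by
      rw [Finset.card_erase_of_mem hD₂', Finset.card_erase_of_mem hD₁]
      omega
    have hpos : 2 ≤ 𝒟.card := Finset.one_lt_card.2 ⟨D₁, hD₁, D₂, hD₂, heq⟩
    omega

/-- The `j`-th point on the x-axis. -/
private def linePt (x : ℕ → ℝ) (j : ℕ) : Pt := !₂[x j, 0]

private lemma linePt_dist (x : ℕ → ℝ) (u v : ℕ) :
    dist (linePt x u) (linePt x v) = |x u - x v| := by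
  rw [EuclideanSpace.dist_eq]
  simp [linePt, Fin.sum_univ_two, Real.dist_eq, Real.sqrt_sq_eq_abs]

private lemma linePt_between {x : ℕ → ℝ} {c : Pt} {s : ℝ} {u v w : ℕ}
    (huv : x u ≤ x v) (hvw : x v ≤ x w)
    (hu : linePt x u ∈ Metric.closedBall c s) (hw : linePt x w ∈ Metric.closedBall c s) :
    linePt x v ∈ Metric.closedBall c s := by
  rcases eq_or_lt_of_le (huv.trans hvw) with heq | hlt
  · have h1 : x v = x u := le_antisymm (heq ▸ hvw) huv
    have h2 : linePt x v = linePt x u := by unfold linePt; rw [h1]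
    rw [h2]; exact hu
  · set t : ℝ := (x v - x u) / (x w - x u) with ht
    have hwu : (0:ℝ) < x w - x u := by linarith
    have ht0 : 0 ≤ t := div_nonneg (by linarith) (by linarith)
    have ht1 : t ≤ 1 := (div_le_one hwu).2 (by linarith)
    have hcomb := (convex_closedBall c s) hu hw (by linarith : (0:ℝ) ≤ 1 - t) ht0 (by ring)
    have hEq : (1 - t) • linePt x u + t • linePt x w = linePt x v := by
      ext i
      fin_cases i <;>
        simp [linePt, PiLp.add_apply, PiLp.smul_apply, smul_eq_mul]
      rw [ht]
      field_simp
      ring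
    rwa [hEq] at hcomb

/-- If `2p+1` collinear points have all consecutive gaps at most `2r` but some even-indexed
pair `x_{2i}, x_{2i+2}` (1 ≤ i ≤ p-1) is at distance more than `2r`, then no `p+1` disks of
radius `r` identify them: any identifying family has at least `p+2` disks. -/

theorem no_perfect_identification (p : ℕ) (hp : 1 ≤ p) (r : ℝ) (hr : 0 < r)
    (x : ℕ → ℝ) (hmono : StrictMonoOn x (Set.Icc 1 (2 * p + 1)))
    (hgap : ∀ j, 1 ≤ j → j < 2 * p + 1 → x (j + 1) - x j ≤ 2 * r)
    (hbig : ∃ i, 1 ≤ i ∧ i ≤ p - 1 ∧ 2 * r < x (2 * i + 2) - x (2 * i))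
    (𝒟 : Finset (Set Pt)) (hD : ∀ D ∈ 𝒟, ∃ c : Pt, D = Metric.closedBall c r)
    (hI : Identifies 𝒟 ((Finset.Icc 1 (2 * p + 1)).image (fun j => (!₂[x j, 0] : Pt)))) :
    p + 2 ≤ 𝒟.card := by
  classical
  obtain ⟨i, hi1, hi2, hbig⟩ := hbig
  have hi2' : i + 1 ≤ p := by omega
  have hmemP : ∀ j, 1 ≤ j → j ≤ 2*p+1 →
      linePt x j ∈ (((Finset.Icc 1 (2 * p + 1)).image (fun j => (!₂[x j, 0] : Pt))) : Finset Pt) := by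
    intro j h1 h2
    exact Finset.mem_image.2 ⟨j, Finset.mem_Icc.2 ⟨h1, h2⟩, rfl⟩
  have hmon : ∀ u v, 1 ≤ u → u ≤ v → v ≤ 2*p+1 → x u ≤ x v := by
    intro u v h1 h2 h3
    exact hmono.monotoneOn ⟨h1, by omega⟩ ⟨by omega, h3⟩ h2
  have hsmon : ∀ u v, 1 ≤ u → u < v → v ≤ 2*p+1 → x u < x v := by
    intro u v h1 h2 h3
    exact hmono ⟨h1, by omega⟩ ⟨by omega, h3⟩ h2
  have hconvD : ∀ D ∈ 𝒟, ∀ j k l, 1 ≤ j → j ≤ k → k ≤ l → l ≤ 2*p+1 →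
      linePt x j ∈ D → linePt x l ∈ D → linePt x k ∈ D := by
    intro D hDm j k l h1 h2 h3 h4 hj hl
    obtain ⟨c, rfl⟩ := hD D hDm
    exact linePt_between (hmon j k h1 h2 (by omega)) (hmon k l (by omega) h3 h4) hj hl
  have hsep : ∀ D ∈ 𝒟, ∀ j l, 1 ≤ j → j ≤ 2*i → 2*i+2 ≤ l → l ≤ 2*p+1 →
      linePt x j ∈ D → linePt x l ∈ D → False := by
    intro D hDm j l h1 h2 h3 h4 hj hl
    obtain ⟨c, rfl⟩ := hD D hDm
    have h5 : dist (linePt x j) c ≤ r := Metric.mem_closedBall.1 hj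
    have h6 : dist (linePt x l) c ≤ r := Metric.mem_closedBall.1 hl
    have hd : dist (linePt x j) (linePt x l) ≤ 2 * r := by
      calc dist (linePt x j) (linePt x l) ≤ dist (linePt x j) c + dist c (linePt x l) :=
            dist_triangle _ _ _
        _ ≤ r + r := by rw [dist_comm c]; linarith
        _ = 2*r := by ring
    rw [linePt_dist] at hd
    have hxa : x j ≤ x (2*i) := hmon j (2*i) h1 h2 (by omega)
    have hxb : x (2*i+2) ≤ x l := hmon (2*i+2) l (by omega) h3 h4
    have hjl : x j ≤ x l := by linarith
    rw [abs_sub_comm, abs_of_nonneg (by linarith)] at hd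
    linarith
  have hcov : ∀ j, 1 ≤ j → j ≤ 2*p+1 → ∃ D ∈ 𝒟, linePt x j ∈ D := by
    intro j h1 h2
    exact hI.1 _ (hmemP j h1 h2)
  have hcut : ∀ j, 1 ≤ j → j < 2*p+1 → ∃ D ∈ 𝒟,
      (linePt x j ∈ D ∧ linePt x (j+1) ∉ D) ∨ (linePt x (j+1) ∈ D ∧ linePt x j ∉ D) := by
    intro j h1 h2
    have hne : linePt x j ≠ linePt x (j+1) := by
      intro h
      have hx : x j = x (j+1) := by
        have := congrArg (fun v : Pt => v 0) h
        simpa [linePt] using this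
      exact absurd hx (ne_of_lt (hsmon j (j+1) h1 (by omega) (by omega)))
    exact hI.2 _ (hmemP j h1 (by omega)) _ (hmemP (j+1) (by omega) (by omega)) hne
  set 𝒟₁ := 𝒟.filter (fun D => ∃ j, 1 ≤ j ∧ j ≤ 2*i ∧ linePt x j ∈ D) with h𝒟₁
  set 𝒟₂ := 𝒟.filter (fun D => ∃ l, 2*i+2 ≤ l ∧ l ≤ 2*p+1 ∧ linePt x l ∈ D) with h𝒟₂
  have hb1 : 2*i - 1 + 2 ≤ 2 * 𝒟₁.card := by
    apply block_bound 1 (2*i) (by omega) 𝒟₁ (fun D j => linePt x j ∈ D)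
    · intro D hDm j k l h1 h2 h3 h4 hj hl
      exact hconvD D (Finset.mem_of_mem_filter _ hDm) j k l h1 h2 h3 (by omega) hj hl
    · obtain ⟨D, hDm, hm⟩ := hcov 1 le_rfl (by omega)
      exact ⟨D, Finset.mem_filter.2 ⟨hDm, 1, le_rfl, by omega, hm⟩, hm⟩
    · obtain ⟨D, hDm, hm⟩ := hcov (2*i) (by omega) (by omega)
      exact ⟨D, Finset.mem_filter.2 ⟨hDm, 2*i, by omega, le_rfl, hm⟩, hm⟩
    · intro j h1 h2
      obtain ⟨D, hDm, hc⟩ := hcut j h1 (by omega)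
      refine ⟨D, Finset.mem_filter.2 ⟨hDm, ?_⟩, hc⟩
      rcases hc with ⟨h', _⟩ | ⟨h', _⟩
      · exact ⟨j, h1, by omega, h'⟩
      · exact ⟨j+1, by omega, by omega, h'⟩
  have hb2 : (2*p+1) - (2*i+2) + 2 ≤ 2 * 𝒟₂.card := by
    apply block_bound (2*i+2) (2*p+1) (by omega) 𝒟₂ (fun D j => linePt x j ∈ D)
    · intro D hDm j k l h1 h2 h3 h4 hj hl
      exact hconvD D (Finset.mem_of_mem_filter _ hDm) j k l (by omega) h2 h3 h4 hj hl
    · obtain ⟨D, hDm, hm⟩ := hcov (2*i+2) (by omega) (by omega)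
      exact ⟨D, Finset.mem_filter.2 ⟨hDm, 2*i+2, le_rfl, by omega, hm⟩, hm⟩
    · obtain ⟨D, hDm, hm⟩ := hcov (2*p+1) (by omega) le_rfl
      exact ⟨D, Finset.mem_filter.2 ⟨hDm, 2*p+1, by omega, le_rfl, hm⟩, hm⟩
    · intro j h1 h2
      obtain ⟨D, hDm, hc⟩ := hcut j (by omega) h2
      refine ⟨D, Finset.mem_filter.2 ⟨hDm, ?_⟩, hc⟩
      rcases hc with ⟨h', _⟩ | ⟨h', _⟩
      · exact ⟨j, h1, by omega, h'⟩
      · exact ⟨j+1, by omega, by omega, h'⟩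
  have hdisj : Disjoint 𝒟₁ 𝒟₂ := by
    rw [Finset.disjoint_left]
    intro D hd1 hd2
    obtain ⟨hDm, j, hj1, hj2, hjm⟩ := Finset.mem_filter.1 hd1
    obtain ⟨-, l, hl1, hl2, hlm⟩ := Finset.mem_filter.1 hd2
    exact hsep D hDm j l hj1 hj2 hl1 hl2 hjm hlm
  have hunion : 𝒟₁.card + 𝒟₂.card ≤ 𝒟.card := by
    rw [← Finset.card_union_of_disjoint hdisj]
    exact Finset.card_le_card
      (Finset.union_subset (Finset.filter_subset _ _) (Finset.filter_subset _ _))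
  omega
end
end

section
/- For every pair of integers n, k with ⌈(1+√(1+4(n−1)))/2⌉ ≤ k ≤ ⌈(n+1)/2⌉, there exists a set P of n points in ℝ² whose minimum identifying number by disks is exactly k. -/
noncomputable section

namespace AVA

open Real Finset

/-! ### Real-analytic helpers -/

/-- The radius at which a point in direction `θ` has "threshold" `c`. -/
def rad (c : ℝ) : ℝ := c + Real.sqrt (c ^ 2 + 1)

lemma sqrt_sq_add_one_gt (c : ℝ) : -c < Real.sqrt (c ^ 2 + 1) := by
  have h1 : (0:ℝ) ≤ c ^ 2 + 1 := by positivity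
  nlinarith [Real.sq_sqrt h1, Real.sqrt_nonneg (c ^ 2 + 1), sq_nonneg (Real.sqrt (c ^ 2 + 1) + c)]

lemma rad_pos (c : ℝ) : 0 < rad c := by
  have := sqrt_sq_add_one_gt c; unfold rad; linarith

lemma rad_sq (c : ℝ) : rad c ^ 2 = 2 * c * rad c + 1 := by
  have h1 : (0:ℝ) ≤ c ^ 2 + 1 := by positivity
  have hs := Real.sq_sqrt h1
  unfold rad; nlinarith [hs]

lemma rad_lt {a b : ℝ} (h : a < b) : rad a < rad b := by
  have h1 : (0:ℝ) ≤ a ^ 2 + 1 := by positivity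
  have h2 : (0:ℝ) ≤ b ^ 2 + 1 := by positivity
  have hsa := Real.sq_sqrt h1
  have hsb := Real.sq_sqrt h2
  have hga := sqrt_sq_add_one_gt a
  have hgb := sqrt_sq_add_one_gt b
  have hna := Real.sqrt_nonneg (a ^ 2 + 1)
  have hnb := Real.sqrt_nonneg (b ^ 2 + 1)
  unfold rad
  nlinarith [mul_pos (sub_pos.mpr h)
    (show (0:ℝ) < a + b + Real.sqrt (a ^ 2 + 1) + Real.sqrt (b ^ 2 + 1) by linarith)]

/-! ### Points in the plane -/

def mkPt (x y : ℝ) : Pt := (WithLp.equiv 2 (Fin 2 → ℝ)).symm ![x, y]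

@[simp] lemma mkPt_zero_apply (x y : ℝ) : mkPt x y 0 = x := rfl
@[simp] lemma mkPt_one_apply (x y : ℝ) : mkPt x y 1 = y := rfl

lemma dist_mkPt (x y x' y' : ℝ) :
    dist (mkPt x y) (mkPt x' y') = Real.sqrt ((x - x') ^ 2 + (y - y') ^ 2) := by
  rw [EuclideanSpace.dist_eq]
  congr 1
  rw [Fin.sum_univ_two]
  simp [Real.dist_eq, sq_abs]

lemma smul_mkPt (r x y : ℝ) : r • mkPt x y = mkPt (r * x) (r * y) := by
  ext i
  fin_cases i <;> rfl

lemma neg_mkPt (x y : ℝ) : -mkPt x y = mkPt (-x) (-y) := by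
  ext i
  fin_cases i <;> rfl

def ept (θ : ℝ) : Pt := mkPt (Real.cos θ) (Real.sin θ)

lemma ept_ne_zero (θ : ℝ) : ept θ ≠ 0 := by
  intro h
  have h0 : Real.cos θ = 0 := by
    have := congrArg (fun p : Pt => p 0) h
    simpa [ept] using this
  have h1 : Real.sin θ = 0 := by
    have := congrArg (fun p : Pt => p 1) h
    simpa [ept] using this
  have := Real.sin_sq_add_cos_sq θ
  rw [h0, h1] at this; norm_num at this

lemma ept_pi_add (x : ℝ) : ept (π + x) = -ept x := by
  unfold ept
  rw [neg_mkPt,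
    show Real.cos (π + x) = -Real.cos x by rw [Real.cos_add, Real.cos_pi, Real.sin_pi]; ring,
    show Real.sin (π + x) = -Real.sin x by rw [Real.sin_add, Real.cos_pi, Real.sin_pi]; ring]

/-- Membership of the special points in disks of radius √2 centered on the unit circle. -/
lemma mem_disk_iff (c θ θ' : ℝ) :
    rad c • ept θ ∈ Metric.closedBall (ept θ') (Real.sqrt 2) ↔ c ≤ Real.cos (θ - θ') := by
  set ρ := rad c with hρdef
  have hρ : 0 < ρ := rad_pos c
  have hsq : ρ ^ 2 = 2 * c * ρ + 1 := rad_sq c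
  rw [Metric.mem_closedBall]
  unfold ept
  rw [smul_mkPt, dist_mkPt,
    Real.sqrt_le_sqrt_iff (by norm_num : (0:ℝ) ≤ 2)]
  have hexp : (ρ * Real.cos θ - Real.cos θ') ^ 2 + (ρ * Real.sin θ - Real.sin θ') ^ 2
      = ρ ^ 2 + 1 - 2 * ρ * Real.cos (θ - θ') := by
    rw [Real.cos_sub]
    have h1 := Real.sin_sq_add_cos_sq θ
    have h2 := Real.sin_sq_add_cos_sq θ'
    nlinarith [h1, h2]
  rw [hexp]
  constructor
  · intro h
    by_contra hc
    push_neg at hc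
    nlinarith [mul_pos hρ (sub_pos.mpr hc)]
  · intro h
    have h2 : 0 ≤ ρ * (Real.cos (θ - θ') - c) := mul_nonneg hρ.le (by linarith)
    nlinarith

/-- The key cosine comparison: angles are integer multiples of `π/(2k)`. -/
lemma cos_comp {k : ℕ} (hk : 1 ≤ k) (u b : ℤ) (hb0 : 0 ≤ b) (hb2 : b ≤ 2 * k) :
    Real.cos (π * b / (2 * k)) ≤ Real.cos (π * u / (2 * k)) ↔
      u % (4 * k) ≤ b ∨ 4 * k - b ≤ u % (4 * k) := by
  have hkR : (1:ℝ) ≤ (k:ℝ) := by exact_mod_cast hk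
  have hk0 : (0:ℝ) < 2 * (k:ℝ) := by linarith
  have hπ := Real.pi_pos
  set r := u % (4 * (k:ℤ)) with hrdef
  have hr0 : 0 ≤ r := Int.emod_nonneg u (by positivity)
  have hr4 : r < 4 * k := Int.emod_lt_of_pos u (by positivity)
  -- reduce cos (π u / 2k) to cos (π r / 2k)
  have hred : Real.cos (π * u / (2 * k)) = Real.cos (π * r / (2 * k)) := by
    have hdiv := Int.mul_ediv_add_emod u (4 * (k:ℤ))
    set q' : ℤ := u / (4 * (k:ℤ)) with hq'
    have : π * u / (2 * k) = π * r / (2 * k) + (q' : ℝ) * (2 * π) := by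
      have hu : (u:ℝ) = 4 * k * (q' : ℝ) + (r : ℝ) := by
        exact_mod_cast hdiv.symm
      rw [hu]
      field_simp
      ring
    rw [this, Real.cos_add_int_mul_two_pi]
  rw [hred]
  -- an auxiliary comparison for angles in [0, π]
  have main : ∀ w : ℤ, 0 ≤ w → w ≤ 2 * k →
      (Real.cos (π * b / (2 * k)) ≤ Real.cos (π * w / (2 * k)) ↔ w ≤ b) := by
    intro w hw0 hw2
    have hwR0 : (0:ℝ) ≤ π * w / (2 * k) := by
      apply div_nonneg _ (by linarith)
      have : (0:ℝ) ≤ (w:ℝ) := by exact_mod_cast hw0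
      positivity
    have hbR0 : (0:ℝ) ≤ π * b / (2 * k) := by
      apply div_nonneg _ (by linarith)
      have : (0:ℝ) ≤ (b:ℝ) := by exact_mod_cast hb0
      positivity
    have hwpi : π * w / (2 * k) ≤ π := by
      rw [div_le_iff₀ hk0]
      have : (w:ℝ) ≤ 2 * k := by exact_mod_cast hw2
      nlinarith
    have hbpi : π * b / (2 * k) ≤ π := by
      rw [div_le_iff₀ hk0]
      have : (b:ℝ) ≤ 2 * k := by exact_mod_cast hb2
      nlinarith
    constructor
    · intro h
      by_contra hc
      push_neg at hc
      have hlt : π * b / (2 * k) < π * w / (2 * k) := by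
        rw [div_lt_div_iff₀ hk0 hk0]
        have : (b:ℝ) < w := by exact_mod_cast hc
        nlinarith [mul_pos (mul_pos hπ (sub_pos.mpr this)) hk0]
      have := Real.cos_lt_cos_of_nonneg_of_le_pi hbR0 hwpi hlt
      linarith
    · intro h
      apply Real.cos_le_cos_of_nonneg_of_le_pi hwR0 hbpi
      rw [div_le_div_iff₀ hk0 hk0]
      have : (w:ℝ) ≤ b := by exact_mod_cast h
      nlinarith [mul_nonneg (mul_nonneg hπ.le (sub_nonneg.mpr this)) hk0.le]
  rcases le_or_gt r (2 * k) with hr2 | hr2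
  · rw [main r hr0 hr2]
    omega
  · have hred2 : Real.cos (π * r / (2 * k)) = Real.cos (π * (4 * k - r) / (2 * k)) := by
      have : π * (4 * k - r) / (2 * k) = 2 * π - π * r / (2 * k) := by
        push_cast
        field_simp
        ring
      rw [this, Real.cos_two_pi_sub]
    rw [hred2]
    have h2 := main (4 * k - r) (by omega) (by omega)
    push_cast at h2 ⊢
    rw [h2]
    omega

/-! ### The arrangement: k disks with centers on the unit circle -/

def dsk (k i : ℕ) : Set Pt := Metric.closedBall (ept (π * (4 * i) / (2 * k))) (Real.sqrt 2)

def ppt (k a b : ℕ) : Pt := rad (Real.cos (π * b / (2 * k))) • ept (π * a / (2 * k))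

lemma isDisk_dsk (k i : ℕ) : IsDisk (dsk k i) :=
  ⟨_, _, Real.sqrt_nonneg 2, rfl⟩

lemma mem_dsk {k : ℕ} (hk : 1 ≤ k) {a b i : ℕ} (hb : b ≤ 2 * k) :
    ppt k a b ∈ dsk k i ↔
      (4 * (i:ℤ) - a) % (4 * k) ≤ b ∨ 4 * k - b ≤ (4 * (i:ℤ) - a) % (4 * k) := by
  have hk0 : ((k:ℝ)) ≠ 0 := by
    have : (1:ℝ) ≤ (k:ℝ) := by exact_mod_cast hk
    linarith
  rw [ppt, dsk, mem_disk_iff]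
  have harg : π * a / (2 * k) - π * (4 * i) / (2 * k)
      = -(π * (((4 * (i:ℤ) - a : ℤ)):ℝ) / (2 * k)) := by
    push_cast
    field_simp
    ring
  rw [harg, Real.cos_neg]
  have := cos_comp hk (4 * (i:ℤ) - a) (b:ℤ) (by exact_mod_cast Nat.zero_le b)
    (by exact_mod_cast hb)
  rw [show ((b:ℤ):ℝ) = ((b:ℕ):ℝ) by push_cast; ring] at this
  exact this

/-! ### Signature computations -/

lemma emod_bounds {k : ℕ} (hk : 1 ≤ k) (v : ℤ) (h1 : -(4*(k:ℤ)) < v) (h2 : v < 4*k) :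
    v % (4*(k:ℤ)) = if 0 ≤ v then v else v + 4*k := by
  split_ifs with h
  · exact Int.emod_eq_of_lt h h2
  · have h3 : (v + 4*(k:ℤ)) % (4*(k:ℤ)) = v % (4*(k:ℤ)) := by
      rw [show v + 4*(k:ℤ) = v + 4*(k:ℤ)*1 by ring, Int.add_mul_emod_self_left]
    rw [← h3]
    exact Int.emod_eq_of_lt (by omega) (by omega)

def sL (k L : ℕ) : ℕ := (k - (L - 1) / 2) % k
def tM (k M : ℕ) : ℕ := (k - M) / 2 + 1

lemma sL_lt {k : ℕ} (hk : 1 ≤ k) (L : ℕ) : sL k L < k := Nat.mod_lt _ (by omega)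

lemma tM_lt {k M : ℕ} (hM1 : 1 ≤ M) (hMk : M ≤ k - 1) : tM k M < k := by
  unfold tM; omega

lemma sL_ne_tM {k L : ℕ} (hL1 : 1 ≤ L) (hLk : L ≤ k - 1) : sL k L ≠ tM k L := by
  have hk : 2 ≤ k := by omega
  unfold sL tM
  rcases Nat.lt_or_ge ((L-1)/2) 1 with h | h
  · have h00 : (L-1)/2 = 0 := by omega
    rw [h00, Nat.sub_zero, Nat.mod_self]
    omega
  · rw [Nat.mod_eq_of_lt (by omega)]
    omega

lemma sig_off {k s L i : ℕ} (hk : 1 ≤ k) (hs : s < k) (hL1 : 1 ≤ L) (hLk : L ≤ k) (hi : i < k) :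
    ppt k (4*s + 2*L - 2) (2*L - 1) ∈ dsk k i ↔ (i + k - s) % k < L := by
  obtain ⟨L, rfl⟩ : ∃ L', L = L' + 1 := ⟨L - 1, by omega⟩
  have e1 : (4*s + 2*(L+1) - 2 : ℕ) = 4*s + 2*L := by omega
  have e2 : (2*(L+1) - 1 : ℕ) = 2*L + 1 := by omega
  rw [e1, e2, mem_dsk hk (by omega)]
  rcases Nat.lt_or_ge (i + k - s) k with hc | hc
  · have hjmod : (i + k - s) % k = i + k - s := Nat.mod_eq_of_lt hc
    rw [hjmod]
    have hcast : (4*(i:ℤ) - ((4*s + 2*L : ℕ) : ℤ))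
        = (4*(((i + k - s : ℕ)):ℤ) - 2*L) + 4*(k:ℤ)*(-1) := by
      push_cast; omega
    rw [hcast, Int.add_mul_emod_self_left,
      emod_bounds hk (4*(((i + k - s : ℕ)):ℤ) - 2*L) (by omega) (by omega)]
    split_ifs with h <;> omega
  · have e4 : i + k - s - k = i - s := by omega
    have hjmod : (i + k - s) % k = i - s := by
      rw [Nat.mod_eq_sub_mod hc, e4, Nat.mod_eq_of_lt (by omega)]
    rw [hjmod]
    have hcast : (4*(i:ℤ) - ((4*s + 2*L : ℕ) : ℤ))
        = (4*(((i - s : ℕ)):ℤ) - 2*L) + 4*(k:ℤ)*0 := by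
      push_cast; omega
    rw [hcast, Int.add_mul_emod_self_left,
      emod_bounds hk (4*(((i - s : ℕ)):ℤ) - 2*L) (by omega) (by omega)]
    split_ifs with h <;> omega

lemma sig_pos {k L i : ℕ} (hk : 1 ≤ k) (hL1 : 1 ≤ L) (hLk : L ≤ k) (hi : i < k) :
    ppt k 1 (2*L) ∈ dsk k i ↔ (i + k - sL k L) % k < L := by
  rw [mem_dsk hk (by omega)]
  rw [show (4*(i:ℤ) - ((1:ℕ):ℤ)) = 4*(i:ℤ) - 1 by push_cast; ring,
    emod_bounds hk (4*(i:ℤ) - 1) (by omega) (by omega)]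
  unfold sL
  rcases Nat.lt_or_ge ((L-1)/2) 1 with hd | hd
  · have h00 : (L-1)/2 = 0 := by omega
    rw [h00, Nat.sub_zero, Nat.mod_self, Nat.sub_zero, Nat.add_mod_right,
      Nat.mod_eq_of_lt hi]
    split_ifs with h <;> omega
  · rw [Nat.mod_eq_of_lt (show k - (L-1)/2 < k by omega)]
    have e3 : i + k - (k - (L-1)/2) = i + (L-1)/2 := by omega
    rw [e3]
    rcases Nat.lt_or_ge (i + (L-1)/2) k with hc | hc
    · rw [Nat.mod_eq_of_lt hc]; split_ifs with h <;> omega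
    · rw [Nat.mod_eq_sub_mod hc, Nat.mod_eq_of_lt (by omega)]
      split_ifs with h <;> omega

lemma sig_neg {k M i : ℕ} (hM1 : 1 ≤ M) (hMk : M ≤ k - 1) (hi : i < k) :
    ppt k (2*k+1) (2*M) ∈ dsk k i ↔ (i + k - tM k M) % k < M := by
  have hk : 2 ≤ k := by omega
  rw [mem_dsk (show 1 ≤ k by omega) (by omega)]
  rw [show (4*(i:ℤ) - ((2*k+1 : ℕ):ℤ)) = 4*(i:ℤ) - (2*(k:ℤ)+1) by push_cast; ring,
    emod_bounds (show 1 ≤ k by omega) (4*(i:ℤ) - (2*(k:ℤ)+1)) (by omega) (by omega)]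
  unfold tM
  have e3 : i + k - ((k - M)/2 + 1) = i + (k - ((k-M)/2 + 1)) := by omega
  rw [e3]
  rcases Nat.lt_or_ge (i + (k - ((k-M)/2+1))) k with hc | hc
  · rw [Nat.mod_eq_of_lt hc]; split_ifs with h <;> omega
  · rw [Nat.mod_eq_sub_mod hc, Nat.mod_eq_of_lt (by omega)]
    split_ifs with h <;> omega

/-! ### Cyclic windows -/

lemma hmod1 {k s j : ℕ} (hs : s < k) (hj : j < k) : ((s + j) % k + k - s) % k = j := by
  rcases Nat.lt_or_ge (s + j) k with h | h
  · rw [Nat.mod_eq_of_lt h, show s + j + k - s = j + k by omega, Nat.add_mod_right,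
      Nat.mod_eq_of_lt hj]
  · have h2 : (s + j) % k = s + j - k := by
      rw [Nat.mod_eq_sub_mod h, Nat.mod_eq_of_lt (by omega)]
    rw [h2, show s + j - k + k - s = j by omega, Nat.mod_eq_of_lt hj]

lemma hmod2 {k s i : ℕ} (hs : s < k) (hi : i < k) : ((i + k - s) % k + s) % k = i := by
  rcases Nat.lt_or_ge (i + k - s) k with h | h
  · rw [Nat.mod_eq_of_lt h, show i + k - s + s = i + k by omega, Nat.add_mod_right,
      Nat.mod_eq_of_lt hi]
  · have h2 : (i + k - s) % k = i - s := by
      rw [Nat.mod_eq_sub_mod h, show i + k - s - k = i - s by omega,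
        Nat.mod_eq_of_lt (by omega)]
    rw [h2, show i - s + s = i by omega, Nat.mod_eq_of_lt hi]

def J (k s L : ℕ) : Finset ℕ := (Finset.range k).filter (fun i => (i + k - s) % k < L)

lemma J_card {k s L : ℕ} (hk : 1 ≤ k) (hs : s < k) (hL : L ≤ k) : (J k s L).card = L := by
  classical
  have himg : J k s L = (Finset.range L).image (fun j => (s + j) % k) := by
    ext i
    simp only [J, Finset.mem_filter, Finset.mem_range, Finset.mem_image]
    constructor
    · rintro ⟨hik, hlt⟩
      exact ⟨(i + k - s) % k, hlt, by rw [Nat.add_comm]; exact hmod2 hs hik⟩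
    · rintro ⟨j, hj, rfl⟩
      have hjk : j < k := lt_of_lt_of_le hj hL
      refine ⟨Nat.mod_lt _ (by omega), ?_⟩
      rw [hmod1 hs hjk]
      exact hj
  rw [himg, Finset.card_image_of_injOn, Finset.card_range]
  intro a ha b hb hab
  simp only [Finset.coe_range, Set.mem_Iio] at ha hb
  have hab' : (s + a) % k = (s + b) % k := hab
  have h1 := hmod1 hs (lt_of_lt_of_le ha hL)
  have h2 := hmod1 hs (lt_of_lt_of_le hb hL)
  rw [hab'] at h1
  exact h1.symm.trans h2

lemma mod_cancel {k s s' : ℕ} (hs : s < k) (hs' : s' < k) (h : (s' + k - s) % k = 0) :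
    s = s' := by
  rcases Nat.lt_or_ge (s' + k - s) k with hc | hc
  · rw [Nat.mod_eq_of_lt hc] at h; omega
  · have h2 : (s' + k - s) % k = s' - s := by
      rw [Nat.mod_eq_sub_mod hc, show s' + k - s - k = s' - s by omega,
        Nat.mod_eq_of_lt (by omega)]
    rw [h2] at h
    omega

lemma shift_comp {k s s' j : ℕ} (hs : s < k) (hs' : s' < k) (hj : j < k) :
    ((s' + j) % k + k - s) % k = (j + (s' + k - s) % k) % k := by
  have hA : ((s' + j) % k + k - s) % k = (s' + j + k - s) % k := by
    rcases Nat.lt_or_ge (s' + j) k with h | h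
    · rw [Nat.mod_eq_of_lt h]
    · have h2 : (s' + j) % k = s' + j - k := by
        rw [Nat.mod_eq_sub_mod h, Nat.mod_eq_of_lt (by omega)]
      rw [h2, show s' + j - k + k - s = s' + j + k - s - k by omega,
        ← Nat.mod_eq_sub_mod (by omega)]
  have hB : (j + (s' + k - s) % k) % k = (j + (s' + k - s)) % k := Nat.add_mod_mod _ _ _
  rw [hA, hB, show j + (s' + k - s) = s' + j + k - s by omega]

lemma J_det {k s s' L L' : ℕ} (hk : 1 ≤ k) (hs : s < k) (hs' : s' < k)
    (hL1 : 1 ≤ L) (hLk : L ≤ k) (hL1' : 1 ≤ L') (hLk' : L' ≤ k)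
    (h : ∀ i, i < k → ((i + k - s) % k < L ↔ (i + k - s') % k < L')) :
    L = L' ∧ (L < k → s = s') := by
  classical
  have hJ : J k s L = J k s' L' := by
    ext i
    simp only [J, Finset.mem_filter, Finset.mem_range]
    constructor
    · rintro ⟨ha, hb⟩; exact ⟨ha, (h i ha).1 hb⟩
    · rintro ⟨ha, hb⟩; exact ⟨ha, (h i ha).2 hb⟩
  have hLL : L = L' := by
    have hcl := J_card hk hs hLk
    rw [hJ, J_card hk hs' hLk'] at hcl
    omega
  subst hLL
  refine ⟨rfl, fun hLltk => ?_⟩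
  set x := (s' + k - s) % k with hx
  have hxk : x < k := Nat.mod_lt _ (by omega)
  have hx0 : x < L := by
    have h0 : (s' + k - s') % k < L := by
      rw [show s' + k - s' = k by omega, Nat.mod_self]; omega
    exact (h s' hs').2 h0
  have hi1k : (s' + (k-1)) % k < k := Nat.mod_lt _ (by omega)
  have hbad' : ¬ (((s' + (k-1)) % k + k - s') % k < L) := by
    rw [hmod1 hs' (by omega : k - 1 < k)]
    omega
  have hbad : ¬ (((s' + (k-1)) % k + k - s) % k < L) :=
    fun hc => hbad' ((h _ hi1k).1 hc)
  rw [shift_comp hs hs' (by omega : k - 1 < k), ← hx] at hbad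
  rcases Nat.eq_zero_or_pos x with hx00 | hxpos
  · exact mod_cancel hs hs' hx00
  · exfalso
    rw [show k - 1 + x = (x - 1) + k by omega, Nat.add_mod_right,
      Nat.mod_eq_of_lt (by omega)] at hbad
    omega

/-! ### The menu of windows and the chosen points -/

def menu (k : ℕ) : Finset (ℕ × ℕ) :=
  (Finset.range k ×ˢ Finset.Icc 1 (k-1)) ∪ {(sL k k, k)}

lemma mem_menu {k : ℕ} {q : ℕ × ℕ} :
    q ∈ menu k ↔ ((q.1 < k ∧ 1 ≤ q.2 ∧ q.2 ≤ k - 1) ∨ q = (sL k k, k)) := by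
  simp [menu, Finset.mem_product, and_assoc]
  exact or_comm

lemma menu_spec {k : ℕ} (hk : 1 ≤ k) {q : ℕ × ℕ} (hq : q ∈ menu k) :
    q.1 < k ∧ 1 ≤ q.2 ∧ q.2 ≤ k ∧ (q.2 = k → q.1 = sL k k) := by
  rcases mem_menu.1 hq with h | h
  · exact ⟨h.1, h.2.1, by omega, fun hc => by omega⟩
  · rw [h]
    exact ⟨sL_lt hk k, by omega, le_refl k, fun _ => rfl⟩

lemma menu_card {k : ℕ} (hk : 1 ≤ k) : (menu k).card = k * (k-1) + 1 := by
  have hd : Disjoint (Finset.range k ×ˢ Finset.Icc 1 (k-1))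
      ({(sL k k, k)} : Finset (ℕ×ℕ)) := by
    simp only [Finset.disjoint_singleton_right, Finset.mem_product, Finset.mem_Icc,
      Finset.mem_range]
    omega
  rw [menu, Finset.card_union_of_disjoint hd, Finset.card_product, Finset.card_range,
    Nat.card_Icc, Finset.card_singleton, show k - 1 + 1 - 1 = k - 1 by omega]

def required (k : ℕ) : Finset (ℕ × ℕ) :=
  ((Finset.Icc 1 (k-1)).image fun L => (sL k L, L)) ∪
  ((Finset.Icc 1 (k-1)).image fun M => (tM k M, M)) ∪ {(sL k k, k)}

lemma required_subset {k : ℕ} (hk : 1 ≤ k) : required k ⊆ menu k := by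
  intro q hq
  rw [mem_menu]
  simp only [required, Finset.mem_union, Finset.mem_image, Finset.mem_Icc,
    Finset.mem_singleton] at hq
  rcases hq with (⟨L, ⟨ha, hb⟩, rfl⟩ | ⟨M, ⟨ha, hb⟩, rfl⟩) | h
  · exact Or.inl ⟨sL_lt hk L, ha, hb⟩
  · exact Or.inl ⟨tM_lt ha hb, ha, hb⟩
  · exact Or.inr h

lemma required_card {k : ℕ} (hk : 1 ≤ k) : (required k).card = 2 * k - 1 := by
  have hinj1 : Set.InjOn (fun L => (sL k L, L)) ↑(Finset.Icc 1 (k-1)) :=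
    fun a _ b _ hab => congrArg Prod.snd hab
  have hinj2 : Set.InjOn (fun M => (tM k M, M)) ↑(Finset.Icc 1 (k-1)) :=
    fun a _ b _ hab => congrArg Prod.snd hab
  have hd1 : Disjoint ((Finset.Icc 1 (k-1)).image fun L => (sL k L, L))
      ((Finset.Icc 1 (k-1)).image fun M => (tM k M, M)) := by
    rw [Finset.disjoint_left]
    rintro q hq1 hq2
    simp only [Finset.mem_image, Finset.mem_Icc] at hq1 hq2
    obtain ⟨L, ⟨hL1, hL2⟩, rfl⟩ := hq1
    obtain ⟨M, ⟨hM1, hM2⟩, hM⟩ := hq2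
    have h2 : M = L := congrArg Prod.snd hM
    subst h2
    exact sL_ne_tM hL1 hL2 (congrArg Prod.fst hM).symm
  have hd2 : Disjoint (((Finset.Icc 1 (k-1)).image fun L => (sL k L, L)) ∪
      ((Finset.Icc 1 (k-1)).image fun M => (tM k M, M)))
      ({(sL k k, k)} : Finset (ℕ×ℕ)) := by
    rw [Finset.disjoint_singleton_right]
    simp only [Finset.mem_union, Finset.mem_image, Finset.mem_Icc]
    rintro (⟨L, ⟨ha, hb⟩, hL⟩ | ⟨M, ⟨ha, hb⟩, hM⟩)
    · have := congrArg Prod.snd hL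
      simp only at this
      omega
    · have := congrArg Prod.snd hM
      simp only at this
      omega
  rw [required, Finset.card_union_of_disjoint hd2, Finset.card_union_of_disjoint hd1,
    Finset.card_image_of_injOn hinj1, Finset.card_image_of_injOn hinj2,
    Nat.card_Icc, Finset.card_singleton]
  omega

def pointOf (k : ℕ) (q : ℕ × ℕ) : Pt :=
  if q.1 = sL k q.2 then ppt k 1 (2*q.2)
  else if q.1 = tM k q.2 then ppt k (2*k+1) (2*q.2)
  else ppt k (4*q.1 + 2*q.2 - 2) (2*q.2 - 1)

lemma sig_pointOf {k : ℕ} (hk : 1 ≤ k) {q : ℕ × ℕ} (hq : q ∈ menu k) {i : ℕ} (hi : i < k) :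
    (pointOf k q ∈ dsk k i) ↔ (i + k - q.1) % k < q.2 := by
  obtain ⟨h1, h2, h3, h4⟩ := menu_spec hk hq
  unfold pointOf
  split_ifs with hc1 hc2
  · rw [hc1]; exact sig_pos hk h2 h3 hi
  · have hlt : q.2 ≤ k - 1 := by
      by_contra hcon
      have hq2 : q.2 = k := by omega
      exact hc1 (by rw [hq2]; exact h4 hq2)
    rw [hc2]; exact sig_neg h2 hlt hi
  · exact sig_off hk h1 h2 h3 hi

lemma menu_eq_of_sig {k : ℕ} (hk : 1 ≤ k) {q q' : ℕ × ℕ} (hq : q ∈ menu k)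
    (hq' : q' ∈ menu k)
    (h : ∀ i, i < k → ((i + k - q.1) % k < q.2 ↔ (i + k - q'.1) % k < q'.2)) : q = q' := by
  obtain ⟨h1, h2, h3, h4⟩ := menu_spec hk hq
  obtain ⟨h1', h2', h3', h4'⟩ := menu_spec hk hq'
  obtain ⟨hLL, hss⟩ := J_det hk h1 h1' h2 h3 h2' h3' h
  rcases Nat.lt_or_ge q.2 k with hlt | hge
  · exact Prod.ext_iff.2 ⟨hss hlt, hLL⟩
  · have e1 : q.2 = k := by omega
    have e2 : q'.2 = k := by omega
    exact Prod.ext_iff.2 ⟨(h4 e1).trans (h4' e2).symm, e1.trans e2.symm⟩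

/-! ### The disk family -/

instance : DecidableEq (Set Pt) := Classical.decEq _

def disks (k : ℕ) : Finset (Set Pt) := (Finset.range k).image (dsk k)

lemma closedBall_center_inj {x y : Pt} {r : ℝ} (hr : 0 ≤ r)
    (h : Metric.closedBall x r = Metric.closedBall y r) : x = y := by
  by_contra hne
  have hd : 0 < dist x y := dist_pos.2 hne
  have hdiv : 0 ≤ r / dist x y := div_nonneg hr hd.le
  set z : Pt := x + (r / dist x y) • (x - y) with hz
  have hzx : dist z x = r := by
    rw [dist_eq_norm, hz, add_sub_cancel_left, norm_smul, Real.norm_eq_abs,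
      abs_of_nonneg hdiv, ← dist_eq_norm]
    field_simp
  have hz1 : z ∈ Metric.closedBall x r := Metric.mem_closedBall.2 (le_of_eq hzx)
  rw [h] at hz1
  have hzy : dist z y = r + dist x y := by
    rw [dist_eq_norm, hz, show x + (r / dist x y) • (x - y) - y
      = (1 + r / dist x y) • (x - y) by module, norm_smul, Real.norm_eq_abs,
      abs_of_nonneg (by linarith), ← dist_eq_norm]
    field_simp
    ring
  have hle := Metric.mem_closedBall.1 hz1
  rw [hzy] at hle
  linarith

lemma dsk_inj {k : ℕ} (hk : 1 ≤ k) {i j : ℕ} (hi : i < k) (hj : j < k)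
    (h : dsk k i = dsk k j) : i = j := by
  have hc := closedBall_center_inj (Real.sqrt_nonneg 2) h
  have hπ := Real.pi_pos
  have hkR : (0:ℝ) < (k:ℝ) := by exact_mod_cast Nat.lt_of_lt_of_le Nat.zero_lt_one hk
  have hrange : ∀ m : ℕ, m < k → (0:ℝ) ≤ π * (4*m)/(2*k) ∧ π * (4*m)/(2*k) < 2*π := by
    intro m hm
    constructor
    · positivity
    · rw [div_lt_iff₀ (by positivity)]
      have hmk : (m:ℝ) < k := by exact_mod_cast hm
      nlinarith
  have h0 : Real.cos (π * (4*i)/(2*k)) = Real.cos (π * (4*j)/(2*k)) := by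
    have := congrArg (fun p : Pt => p 0) hc; simpa [ept] using this
  have h1 : Real.sin (π * (4*i)/(2*k)) = Real.sin (π * (4*j)/(2*k)) := by
    have := congrArg (fun p : Pt => p 1) hc; simpa [ept] using this
  have hcos1 : Real.cos (π * (4*i)/(2*k) - π * (4*j)/(2*k)) = 1 := by
    rw [Real.cos_sub, h0, h1]
    nlinarith [Real.sin_sq_add_cos_sq (π * (4*j)/(2*k))]
  obtain ⟨hi0, hi2⟩ := hrange i hi
  obtain ⟨hj0, hj2⟩ := hrange j hj
  have heq := (Real.cos_eq_one_iff_of_lt_of_lt (by linarith) (by linarith)).1 hcos1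
  have heq2 : π * (4*(i:ℝ)) = π * (4*(j:ℝ)) := by
    have h2k : (2*(k:ℝ)) ≠ 0 := by positivity
    field_simp at heq
    linarith
  have : (i:ℝ) = j := by
    have hπ' : (π:ℝ) ≠ 0 := ne_of_gt hπ
    nlinarith [heq2]
  exact_mod_cast this

lemma disks_card {k : ℕ} (hk : 1 ≤ k) : (disks k).card = k := by
  rw [disks, Finset.card_image_of_injOn, Finset.card_range]
  intro a ha b hb hab
  simp only [Finset.coe_range, Set.mem_Iio] at ha hb
  exact dsk_inj hk ha hb hab

/-! ### The collinear points -/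

def tau (k j : ℕ) : ℝ :=
  if j < k - 1 then -rad (Real.cos (π * ((2*(j+1) : ℕ) : ℝ) / (2*k)))
  else rad (Real.cos (π * ((2*(2*k-1-j) : ℕ) : ℝ) / (2*k)))

lemma rad_cos_lt {k b1 b2 : ℕ} (hk : 1 ≤ k) (h12 : b1 < b2) (hb : b2 ≤ 2*k) :
    rad (Real.cos (π * (b2:ℝ) / (2*k))) < rad (Real.cos (π * (b1:ℝ) / (2*k))) := by
  have hk1 : (1:ℝ) ≤ (k:ℝ) := by exact_mod_cast hk
  have hk0 : (0:ℝ) < 2*(k:ℝ) := by linarith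
  apply rad_lt
  apply Real.cos_lt_cos_of_nonneg_of_le_pi
  · positivity
  · rw [div_le_iff₀ hk0]
    have hbb : (b2:ℝ) ≤ 2*k := by exact_mod_cast hb
    nlinarith [Real.pi_pos]
  · rw [div_lt_div_iff₀ hk0 hk0]
    have hbb : (b1:ℝ) < b2 := by exact_mod_cast h12
    nlinarith [mul_pos (mul_pos Real.pi_pos (sub_pos.mpr hbb)) hk0]

lemma tau_lt {k a b : ℕ} (hk : 1 ≤ k) (hab : a < b) (hb : b < 2*k - 1) :
    tau k a < tau k b := by
  unfold tau
  by_cases ha : a < k - 1 <;> by_cases hbc : b < k - 1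
  · rw [if_pos ha, if_pos hbc]
    exact neg_lt_neg (rad_cos_lt hk (by omega) (by omega))
  · rw [if_pos ha, if_neg hbc]
    have p1 := rad_pos (Real.cos (π * ((2*(a+1) : ℕ):ℝ) / (2*k)))
    have p2 := rad_pos (Real.cos (π * ((2*(2*k-1-b) : ℕ):ℝ) / (2*k)))
    linarith
  · omega
  · rw [if_neg ha, if_neg hbc]
    exact rad_cos_lt hk (by omega) (by omega)

lemma pointOf_pos {k L : ℕ} : pointOf k (sL k L, L) = ppt k 1 (2*L) := by
  simp only [pointOf]
  rw [if_true]

lemma pointOf_neg {k M : ℕ} (hM1 : 1 ≤ M) (hMk : M ≤ k - 1) :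
    pointOf k (tM k M, M) = ppt k (2*k+1) (2*M) := by
  simp only [pointOf]
  rw [if_neg (Ne.symm (sL_ne_tM hM1 hMk)), if_true]

lemma ppt_one_eq {k b : ℕ} : ppt k 1 b
    = rad (Real.cos (π * (b:ℝ) / (2*k))) • ept (π / (2*k)) := by
  unfold ppt
  norm_num

lemma ppt_negdir_eq {k b : ℕ} (hk : 1 ≤ k) : ppt k (2*k+1) b
    = (-(rad (Real.cos (π * (b:ℝ) / (2*k))))) • ept (π / (2*k)) := by
  unfold ppt
  have hkR : ((k:ℝ)) ≠ 0 := Nat.cast_ne_zero.2 (by omega)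
  have harg : π * ((2*k+1 : ℕ):ℝ) / (2*k) = π + π / (2*k) := by
    push_cast
    field_simp
  rw [harg, ept_pi_add, smul_neg, ← neg_smul]

/-! ### The combinatorial lower bound for collinear points -/

lemma comb_lower (P : Finset Pt) (𝒟 : Finset (Set Pt)) (hid : Identifies 𝒟 P)
    (m : ℕ) (hm : 1 ≤ m) (q : ℕ → Pt)
    (hq : ∀ j, j < m → q j ∈ P)
    (hinj : ∀ j1, j1 < m → ∀ j2, j2 < m → q j1 = q j2 → j1 = j2)
    (hconv : ∀ D ∈ 𝒟, ∀ j1 j2 j3, j1 ≤ j2 → j2 ≤ j3 → j3 < m →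
      q j1 ∈ D → q j3 ∈ D → q j2 ∈ D) :
    m + 1 ≤ 2 * 𝒟.card := by
  classical
  set f : Set Pt → Finset ℕ :=
    fun D => (Finset.range (m-1)).filter (fun j => ¬ (q j ∈ D ↔ q (j+1) ∈ D)) with hf
  have key : ∀ D ∈ 𝒟, (f D).card ≤ 2
      ∧ (q 0 ∈ D → (f D).card ≤ 1)
      ∧ (q (m-1) ∈ D → (f D).card ≤ 1)
      ∧ (q 0 ∈ D → q (m-1) ∈ D → (f D).card = 0) := by
    intro D hD
    by_cases hA : ∃ j, j < m ∧ q j ∈ D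
    · set A := (Finset.range m).filter (fun j => q j ∈ D) with hAdef
      have hmemA : ∀ j, j ∈ A ↔ (j < m ∧ q j ∈ D) := by
        intro j; simp [hAdef]
      have hAne : A.Nonempty := by
        obtain ⟨j, hj1, hj2⟩ := hA
        exact ⟨j, (hmemA j).2 ⟨hj1, hj2⟩⟩
      set a := A.min' hAne with hadef
      set b := A.max' hAne with hbdef
      have ha := (hmemA a).1 (A.min'_mem hAne)
      have hb := (hmemA b).1 (A.max'_mem hAne)
      have hchar : ∀ j, j < m → (q j ∈ D ↔ (a ≤ j ∧ j ≤ b)) := by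
        intro j hj
        constructor
        · intro hjD
          exact ⟨A.min'_le j ((hmemA j).2 ⟨hj, hjD⟩), A.le_max' j ((hmemA j).2 ⟨hj, hjD⟩)⟩
        · rintro ⟨hj1, hj2⟩
          exact hconv D hD a j b hj1 hj2 hb.1 ha.2 hb.2
      have hsub0 : ∀ j ∈ f D, (j < m - 1 ∧ (j + 1 = a ∨ j = b)) := by
        intro j hj
        simp only [hf, Finset.mem_filter, Finset.mem_range] at hj
        obtain ⟨hjm, hne⟩ := hj
        refine ⟨hjm, ?_⟩
        rw [hchar j (by omega), hchar (j+1) (by omega)] at hne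
        by_contra hc
        push_neg at hc
        exact hne (by constructor <;> intro <;> omega)
      refine ⟨?_, ?_, ?_, ?_⟩
      · have hss : f D ⊆ {a - 1, b} := by
          intro j hj
          have := (hsub0 j hj).2
          simp only [Finset.mem_insert, Finset.mem_singleton]
          omega
        calc (f D).card ≤ ({a - 1, b} : Finset ℕ).card := Finset.card_le_card hss
          _ ≤ 2 := by
              apply le_trans (Finset.card_insert_le _ _)
              simp
      · intro h0
        have ha0 : a = 0 := by
          have := A.min'_le 0 ((hmemA 0).2 ⟨by omega, h0⟩)
          omega
        have hss : f D ⊆ {b} := by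
          intro j hj
          have := (hsub0 j hj).2
          simp only [Finset.mem_singleton]
          omega
        calc (f D).card ≤ ({b} : Finset ℕ).card := Finset.card_le_card hss
          _ = 1 := Finset.card_singleton b
      · intro h1
        have hbm : b = m - 1 := by
          have := A.le_max' (m-1) ((hmemA (m-1)).2 ⟨by omega, h1⟩)
          have := hb.1
          omega
        have hss : f D ⊆ {a - 1} := by
          intro j hj
          have h3 := (hsub0 j hj).2
          have h4 := (hsub0 j hj).1
          simp only [Finset.mem_singleton]
          omega
        calc (f D).card ≤ ({a - 1} : Finset ℕ).card := Finset.card_le_card hss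
          _ = 1 := Finset.card_singleton _
      · intro h0 h1
        have ha0 : a = 0 := by
          have := A.min'_le 0 ((hmemA 0).2 ⟨by omega, h0⟩)
          omega
        have hbm : b = m - 1 := by
          have := A.le_max' (m-1) ((hmemA (m-1)).2 ⟨by omega, h1⟩)
          have := hb.1
          omega
        have hss : f D = ∅ := by
          rw [Finset.eq_empty_iff_forall_notMem]
          intro j hj
          have h3 := (hsub0 j hj).2
          have h4 := (hsub0 j hj).1
          omega
        rw [hss, Finset.card_empty]
    · push_neg at hA
      have hempty : f D = ∅ := by
        rw [Finset.eq_empty_iff_forall_notMem]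
        intro j hj
        simp only [hf, Finset.mem_filter, Finset.mem_range] at hj
        obtain ⟨hjm, hne⟩ := hj
        exact hne ⟨fun h => absurd h (hA j (by omega)), fun h => absurd h (hA (j+1) (by omega))⟩
      refine ⟨by simp [hempty], fun h0 => absurd h0 (hA 0 (by omega)),
        fun h1 => absurd h1 (hA (m-1) (by omega)),
        fun h0 _ => absurd h0 (hA 0 (by omega))⟩
  have hcover : Finset.range (m-1) ⊆ 𝒟.biUnion f := by
    intro j hj
    rw [Finset.mem_range] at hj
    have hne : q j ≠ q (j+1) := fun hc => by
      have := hinj j (by omega) (j+1) (by omega) hc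
      omega
    obtain ⟨D, hD, hsep⟩ := hid.2 (q j) (hq j (by omega)) (q (j+1)) (hq (j+1) (by omega)) hne
    refine Finset.mem_biUnion.2 ⟨D, hD, ?_⟩
    simp only [hf, Finset.mem_filter, Finset.mem_range]
    refine ⟨hj, ?_⟩
    rcases hsep with ⟨hp1, hp2⟩ | ⟨hp1, hp2⟩ <;> · intro hiff; tauto
  have hsum1 : m - 1 ≤ ∑ D ∈ 𝒟, (f D).card := by
    calc m - 1 = (Finset.range (m-1)).card := (Finset.card_range _).symm
    _ ≤ (𝒟.biUnion f).card := Finset.card_le_card hcover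
    _ ≤ ∑ D ∈ 𝒟, (f D).card := Finset.card_biUnion_le
  obtain ⟨D0, hD0, h0⟩ := hid.1 (q 0) (hq 0 (by omega))
  obtain ⟨D1, hD1, h1⟩ := hid.1 (q (m-1)) (hq (m-1) (by omega))
  by_cases hDD : D0 = D1
  · have hz : (f D0).card = 0 := (key D0 hD0).2.2.2 h0 (hDD ▸ h1)
    have hsplit : ∑ D ∈ 𝒟, (f D).card = (f D0).card + ∑ D ∈ 𝒟.erase D0, (f D).card :=
      (Finset.add_sum_erase 𝒟 _ hD0).symm
    have hrest := Finset.sum_le_card_nsmul (𝒟.erase D0) (fun D => (f D).card) 2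
      (fun x hx => (key x (Finset.mem_of_mem_erase hx)).1)
    simp only [smul_eq_mul] at hrest
    have hce : (𝒟.erase D0).card = 𝒟.card - 1 := Finset.card_erase_of_mem hD0
    have hcard1 : 1 ≤ 𝒟.card := Finset.card_pos.2 ⟨D0, hD0⟩
    omega
  · have h1' : D1 ∈ 𝒟.erase D0 := Finset.mem_erase.2 ⟨fun hc => hDD hc.symm, hD1⟩
    have hb0 : (f D0).card ≤ 1 := (key D0 hD0).2.1 h0
    have hb1 : (f D1).card ≤ 1 := (key D1 hD1).2.2.1 h1
    have hsplit : ∑ D ∈ 𝒟, (f D).card = (f D0).card + ∑ D ∈ 𝒟.erase D0, (f D).card :=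
      (Finset.add_sum_erase 𝒟 _ hD0).symm
    have hsplit2 : ∑ D ∈ 𝒟.erase D0, (f D).card
        = (f D1).card + ∑ D ∈ (𝒟.erase D0).erase D1, (f D).card :=
      (Finset.add_sum_erase _ _ h1').symm
    have hrest := Finset.sum_le_card_nsmul ((𝒟.erase D0).erase D1) (fun D => (f D).card) 2
      (fun x hx => (key x (Finset.mem_of_mem_erase (Finset.mem_of_mem_erase hx))).1)
    simp only [smul_eq_mul] at hrest
    have hce1 : (𝒟.erase D0).card = 𝒟.card - 1 := Finset.card_erase_of_mem hD0
    have hce2 : ((𝒟.erase D0).erase D1).card = (𝒟.erase D0).card - 1 :=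
      Finset.card_erase_of_mem h1'
    have hcard1 : 1 ≤ (𝒟.erase D0).card := Finset.card_pos.2 ⟨D1, h1'⟩
    omega

end AVA

open AVA Real in
/-- Every value `k` between the lower bound `⌈(1+√(1+4(n-1)))/2⌉` and the upper bound
`⌈(n+1)/2⌉` is attained as the minimum identifying number of some `n`-point set. -/
theorem all_values_attained (n k : ℕ) (hn : 1 ≤ n)
    (h1 : ⌈(1 + Real.sqrt (1 + 4 * ((n : ℝ) - 1))) / 2⌉ ≤ (k : ℤ))
    (h2 : k ≤ (n + 2) / 2) :
    ∃ P : Finset Pt, P.card = n ∧ gammaID P = k := by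
  classical
  have hk1 : 1 ≤ k := by
    have hpos : (0:ℤ) < ⌈(1 + Real.sqrt (1 + 4 * ((n : ℝ) - 1))) / 2⌉ := by
      apply Int.ceil_pos.2
      have := Real.sqrt_nonneg (1 + 4 * ((n : ℝ) - 1))
      linarith
    omega
  have hnk : n ≤ k * (k - 1) + 1 := by
    have hle : (1 + Real.sqrt (1 + 4 * ((n : ℝ) - 1))) / 2 ≤ ((k:ℤ):ℝ) := Int.ceil_le.1 h1
    have hle' : (1 + Real.sqrt (1 + 4 * ((n : ℝ) - 1))) / 2 ≤ (k:ℝ) := by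
      exact_mod_cast hle
    have hsqrt : Real.sqrt (1 + 4 * ((n : ℝ) - 1)) ≤ 2 * (k:ℝ) - 1 := by linarith
    have hsq : 1 + 4 * ((n : ℝ) - 1) ≤ (2 * (k:ℝ) - 1) ^ 2 :=
      (Real.sqrt_le_iff.1 hsqrt).2
    have hcast : (1 + 4 * ((n:ℝ) - 1)) = ((4 * (n:ℤ) - 3 : ℤ) : ℝ) := by push_cast; ring
    have hcast2 : (2*(k:ℝ) - 1)^2 = (((2*(k:ℤ)-1)^2 : ℤ) : ℝ) := by push_cast; ring
    rw [hcast, hcast2] at hsq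
    have hZ2 : (4 * (n:ℤ) - 3) ≤ (2*(k:ℤ)-1)^2 := by exact_mod_cast hsq
    have hfin : ((n:ℤ)) ≤ ((k * (k-1) + 1 : ℕ) : ℤ) := by
      have hec : ((k * (k-1) + 1 : ℕ) : ℤ) = (k:ℤ) * ((k:ℤ) - 1) + 1 := by
        rw [Nat.cast_add, Nat.cast_mul, Nat.cast_sub hk1]
        norm_num
      rw [hec]
      nlinarith [hZ2]
    exact_mod_cast hfin
  have hn2k : 2*k ≤ n + 2 := by omega
  -- the chosen set of windows
  set R0 : Finset (ℕ × ℕ) :=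
    if 2*k - 1 ≤ n then required k else (required k).erase (tM k 1, 1) with hR0
  have hmemtm1 : 2 ≤ k → (tM k 1, 1) ∈ required k := by
    intro hk2
    simp only [required, Finset.mem_union, Finset.mem_image, Finset.mem_Icc]
    exact Or.inl (Or.inr ⟨1, ⟨le_refl 1, by omega⟩, rfl⟩)
  have hR0card : R0.card = min n (2*k-1) := by
    rw [hR0]; split_ifs with hcase
    · rw [required_card hk1]; omega
    · have hk2 : 2 ≤ k := by omega
      rw [Finset.card_erase_of_mem (hmemtm1 hk2), required_card hk1]
      omega
  have hR0m : R0 ⊆ menu k := by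
    refine Finset.Subset.trans ?_ (required_subset hk1)
    rw [hR0]; split_ifs
    · exact Finset.Subset.refl _
    · exact Finset.erase_subset _ _
  obtain ⟨C, hRC, hCmenu, hCcard⟩ :=
    Finset.exists_subsuperset_card_eq (n := n) hR0m
      (show R0.card ≤ n by rw [hR0card]; omega)
      (show n ≤ (menu k).card by rw [menu_card hk1]; exact hnk)
  set P : Finset Pt := C.image (pointOf k) with hP
  have hPinj : Set.InjOn (pointOf k) ↑C := by
    intro u hu w hw huw
    simp only [Finset.mem_coe] at hu hw
    have hum := hCmenu hu
    have hwm := hCmenu hw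
    apply menu_eq_of_sig hk1 hum hwm
    intro i hi
    rw [← sig_pointOf hk1 hum hi, ← sig_pointOf hk1 hwm hi, huw]
  have hPcard : P.card = n := by rw [hP, Finset.card_image_of_injOn hPinj, hCcard]
  -- upper bound
  have hdisks : ∀ D ∈ disks k, IsDisk D := by
    intro D hD
    obtain ⟨i, _, rfl⟩ := Finset.mem_image.1 hD
    exact isDisk_dsk k i
  have hident : Identifies (disks k) P := by
    constructor
    · intro p hp
      obtain ⟨u, huC, rfl⟩ := Finset.mem_image.1 hp
      have hum := hCmenu huC
      obtain ⟨hu1, hu2, hu3, hu4⟩ := menu_spec hk1 hum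
      refine ⟨dsk k u.1, Finset.mem_image.2 ⟨u.1, Finset.mem_range.2 hu1, rfl⟩, ?_⟩
      rw [sig_pointOf hk1 hum hu1, show u.1 + k - u.1 = k by omega, Nat.mod_self]
      omega
    · intro p hp q' hq' hpq
      obtain ⟨u, huC, rfl⟩ := Finset.mem_image.1 hp
      obtain ⟨w, hwC, rfl⟩ := Finset.mem_image.1 hq'
      have hum := hCmenu huC
      have hwm := hCmenu hwC
      have hne : ¬ (∀ i, i < k → ((i + k - u.1) % k < u.2 ↔ (i + k - w.1) % k < w.2)) := by
        intro hiff
        exact hpq (by rw [menu_eq_of_sig hk1 hum hwm hiff])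
      push_neg at hne
      obtain ⟨i, hik, hxor⟩ := hne
      refine ⟨dsk k i, Finset.mem_image.2 ⟨i, Finset.mem_range.2 hik, rfl⟩, ?_⟩
      have hu' := sig_pointOf hk1 hum hik
      have hw' := sig_pointOf hk1 hwm hik
      rcases hxor with ⟨hu2, hw2⟩ | ⟨hu2, hw2⟩
      · exact Or.inl ⟨hu'.2 hu2, fun hc => absurd (hw'.1 hc) (by omega)⟩
      · exact Or.inr ⟨hw'.2 hw2, fun hc => absurd (hu'.1 hc) (by omega)⟩
  -- lower bound
  have hlow : ∀ c, (∃ 𝒟 : Finset (Set Pt), 𝒟.card = c ∧ (∀ D ∈ 𝒟, IsDisk D) ∧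
      Identifies 𝒟 P) → k ≤ c := by
    rintro c ⟨𝒟', hcard, hdisk', hid'⟩
    set m := min n (2*k - 1) with hm
    set off := (2*k - 1) - m with hoff
    have hm1 : 1 ≤ m := by omega
    set v : Pt := ept (π / (2*(k:ℝ))) with hv
    set qq : ℕ → Pt := fun j => tau k (j + off) • v with hqq
    have hqmem : ∀ j, j < m → qq j ∈ P := by
      intro j hj
      have hj' : j + off < 2*k - 1 := by omega
      by_cases hcase : j + off < k - 1
      · have hM1 : 1 ≤ j + off + 1 := by omega
        have hMk : j + off + 1 ≤ k - 1 := by omega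
        have hpair : (tM k (j + off + 1), j + off + 1) ∈ R0 := by
          have hmemr : (tM k (j + off + 1), j + off + 1) ∈ required k := by
            simp only [required, Finset.mem_union, Finset.mem_image, Finset.mem_Icc]
            exact Or.inl (Or.inr ⟨j + off + 1, ⟨hM1, hMk⟩, rfl⟩)
          rw [hR0]
          split_ifs with hcc
          · exact hmemr
          · refine Finset.mem_erase.2 ⟨?_, hmemr⟩
            intro hc
            have hc2 : j + off + 1 = 1 := congrArg Prod.snd hc
            omega
        have hpoint : pointOf k (tM k (j + off + 1), j + off + 1) = qq j := by
          rw [pointOf_neg hM1 hMk, ppt_negdir_eq hk1, hqq]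
          simp only
          rw [tau, if_pos hcase, hv]
        rw [hP]
        exact Finset.mem_image.2 ⟨(tM k (j + off + 1), j + off + 1), hRC hpair, hpoint⟩
      · have hL1 : 1 ≤ 2*k - 1 - (j + off) := by omega
        have hLk : 2*k - 1 - (j + off) ≤ k := by omega
        have hpair : (sL k (2*k - 1 - (j + off)), 2*k - 1 - (j + off)) ∈ R0 := by
          have hmemr : (sL k (2*k - 1 - (j + off)), 2*k - 1 - (j + off)) ∈ required k := by
            simp only [required, Finset.mem_union, Finset.mem_image, Finset.mem_Icc,
              Finset.mem_singleton]
            rcases Nat.lt_or_ge (2*k - 1 - (j + off)) k with hlt | hge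
            · exact Or.inl (Or.inl ⟨2*k - 1 - (j + off), ⟨hL1, by omega⟩, rfl⟩)
            · have hLeq : 2*k - 1 - (j + off) = k := by omega
              rw [hLeq]
              exact Or.inr rfl
          rw [hR0]
          split_ifs with hcc
          · exact hmemr
          · refine Finset.mem_erase.2 ⟨?_, hmemr⟩
            intro hc
            have hk2 : 2 ≤ k := by omega
            have hc1 : sL k (2*k - 1 - (j + off)) = tM k 1 := congrArg Prod.fst hc
            have hc2 : 2*k - 1 - (j + off) = 1 := congrArg Prod.snd hc
            rw [hc2] at hc1
            exact sL_ne_tM (le_refl 1) (by omega) hc1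
        have hpoint : pointOf k (sL k (2*k - 1 - (j + off)), 2*k - 1 - (j + off)) = qq j := by
          rw [pointOf_pos, ppt_one_eq, hqq]
          simp only
          rw [tau, if_neg hcase, hv]
        rw [hP]
        exact Finset.mem_image.2
          ⟨(sL k (2*k - 1 - (j + off)), 2*k - 1 - (j + off)), hRC hpair, hpoint⟩
    have hqinj : ∀ j1, j1 < m → ∀ j2, j2 < m → qq j1 = qq j2 → j1 = j2 := by
      intro j1 hj1 j2 hj2 heq
      rw [hqq] at heq
      simp only at heq
      have hv0 : v ≠ 0 := ept_ne_zero _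
      have htau : tau k (j1+off) = tau k (j2+off) := smul_left_injective ℝ hv0 heq
      rcases Nat.lt_trichotomy j1 j2 with hlt | heq' | hgt
      · have := tau_lt hk1 (show j1 + off < j2 + off by omega) (by omega)
        rw [htau] at this
        exact absurd this (lt_irrefl _)
      · exact heq'
      · have := tau_lt hk1 (show j2 + off < j1 + off by omega) (by omega)
        rw [htau] at this
        exact absurd this (lt_irrefl _)
    have hqconv : ∀ D ∈ 𝒟', ∀ j1 j2 j3, j1 ≤ j2 → j2 ≤ j3 → j3 < m →
        qq j1 ∈ D → qq j3 ∈ D → qq j2 ∈ D := by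
      intro D hD j1 j2 j3 h12 h23 h3m hj1D hj3D
      obtain ⟨cc, rr, hrr, rfl⟩ := hdisk' D hD
      have hcvx : Convex ℝ ((fun t : ℝ => t • v) ⁻¹' (Metric.closedBall cc rr)) := by
        apply (convex_closedBall cc rr).is_linear_preimage
        exact ⟨fun a b => add_smul a b v, fun cx x => mul_smul cx x v⟩
      have hoc := hcvx.ordConnected
      rw [hqq] at hj1D hj3D ⊢
      simp only at hj1D hj3D ⊢
      have hmono12 : tau k (j1+off) ≤ tau k (j2+off) := by
        rcases eq_or_lt_of_le h12 with rfl | hlt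
        · exact le_refl _
        · exact (tau_lt hk1 (by omega) (by omega)).le
      have hmono23 : tau k (j2+off) ≤ tau k (j3+off) := by
        rcases eq_or_lt_of_le h23 with rfl | hlt
        · exact le_refl _
        · exact (tau_lt hk1 (by omega) (by omega)).le
      exact hoc.out hj1D hj3D ⟨hmono12, hmono23⟩
    have hcomb := comb_lower P 𝒟' hid' m hm1 qq hqmem hqinj hqconv
    rw [hcard] at hcomb
    omega
  refine ⟨P, hPcard, ?_⟩
  have hub : k ∈ {c | ∃ 𝒟 : Finset (Set Pt), 𝒟.card = c ∧ (∀ D ∈ 𝒟, IsDisk D) ∧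
      Identifies 𝒟 P} := ⟨disks k, disks_card hk1, hdisks, hident⟩
  apply le_antisymm
  · exact Nat.sInf_le hub
  · exact le_csInf ⟨k, hub⟩ (fun c hc => hlow c hc)

end
end
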